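/- arXiv:2411.04506 — 2 statements merged into one kernel-verified Lean document; each statement's English description precedes it below -/
import Mathlib

section
/- Let (π₁, π₂) be a chainable pair of patterns with πᵢ = (aᵢ, bᵢ, cᵢ, dᵢ) that is redundant, i.e., r(π₁, π₂) ≥ min(b₁, c₂). Then: (1) B^{(π₁,π₂)} = D^{π₁*π₂}, i.e., every matrix whose support is contained in that of S_{π₁*π₂} can be written as X₁X₂ with X₁ ∈ D^{π₁}, X₂ ∈ D^{π₂}; (2) ‖π₁ * π₂‖₀ = b₁d₁a₂c₂ < a₁b₁c₁d₁ + a₂b₂c₂d₂ = ‖π₁‖₀ + ‖π₂‖₀. -/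
/-- A *pattern* is a tuple `(a, b, c, d)` of (positive) natural numbers. -/
structure Pattern where
  a : ℕ
  b : ℕ
  c : ℕ
  d : ℕ

namespace Pattern

/-- The entries of a pattern are positive integers. -/
def Pos (π : Pattern) : Prop := 0 < π.a ∧ 0 < π.b ∧ 0 < π.c ∧ 0 < π.d

/-- Number of rows `a*b*d` of a `π`-factor. -/
def rows (π : Pattern) : ℕ := π.a * π.b * π.d

/-- Number of columns `a*c*d` of a `π`-factor. -/
def cols (π : Pattern) : ℕ := π.a * π.c * π.d

/-- `r(π₁, π₂) = a₁c₁/a₂ (= b₂d₂/d₁)`. -/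
def rk (π₁ π₂ : Pattern) : ℕ := π₁.a * π₁.c / π₂.a

/-- A pair of patterns is *chainable* if `a₁c₁/a₂ = b₂d₂/d₁` is a positive integer,
`a₁ ∣ a₂` and `d₂ ∣ d₁`. -/
def Chainable (π₁ π₂ : Pattern) : Prop :=
  π₂.a ∣ π₁.a * π₁.c ∧ π₁.d ∣ π₂.b * π₂.d ∧
    π₁.a * π₁.c / π₂.a = π₂.b * π₂.d / π₁.d ∧
    0 < π₁.a * π₁.c / π₂.a ∧ π₁.a ∣ π₂.a ∧ π₂.d ∣ π₁.d

/-- `π₁ * π₂ := (a₁, b₁d₁/d₂, a₂c₂/a₁, d₂)`. -/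
instance : Mul Pattern :=
  ⟨fun π₁ π₂ => ⟨π₁.a, π₁.b * π₁.d / π₂.d, π₂.a * π₂.c / π₁.a, π₂.d⟩⟩

/-- `‖π‖₀ := a*b*c*d`. -/
def norm0 (π : Pattern) : ℕ := π.a * π.b * π.c * π.d

end Pattern

open scoped Kronecker

/-- The flattening equivalence `(Fin a × Fin b) × Fin d ≃ Fin (a*b*d)`. -/
def kron3Equiv (a b d : ℕ) : (Fin a × Fin b) × Fin d ≃ Fin (a * b * d) :=
  (finProdFinEquiv.prodCongr (Equiv.refl (Fin d))).trans finProdFinEquiv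

/-- The support matrix `S_π = I_a ⊗ 1_{b×c} ⊗ I_d ∈ {0,1}^{abd × acd}`. -/
def Pattern.S (π : Pattern) : Matrix (Fin π.rows) (Fin π.cols) ℕ :=
  Matrix.reindex (kron3Equiv π.a π.b π.d) (kron3Equiv π.a π.c π.d)
    ((1 : Matrix (Fin π.a) (Fin π.a) ℕ) ⊗ₖ
      (Matrix.of fun _ _ => (1 : ℕ) : Matrix (Fin π.b) (Fin π.c) ℕ) ⊗ₖ
      (1 : Matrix (Fin π.d) (Fin π.d) ℕ))

/-- Reindexing a matrix along equalities of dimensions. -/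
def castMat {α : Type*} {m n m' n' : ℕ} (hm : m = m') (hn : n = n')
    (A : Matrix (Fin m) (Fin n) α) : Matrix (Fin m') (Fin n') α :=
  Matrix.of fun i j => A (Fin.cast hm.symm i) (Fin.cast hn.symm j)

/-- `X` is a `π`-factor: its support is contained in that of `S_π`. -/
def IsFactor (π : Pattern) (X : Matrix (Fin π.rows) (Fin π.cols) ℂ) : Prop :=
  ∀ i j, π.S i j = 0 → X i j = 0

/-- A chainable pair is *redundant* if `r(π₁,π₂) ≥ min (b₁, c₂)`. -/
def RedundantPair (π₁ π₂ : Pattern) : Prop := min π₁.b π₂.c ≤ Pattern.rk π₁ π₂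

/-! ### Auxiliary lemmas -/

private lemma dm_mod {d z m : ℕ} (hz : z < d) : (z + d * m) % d = z := by
  rw [Nat.add_mul_mod_self_left, Nat.mod_eq_of_lt hz]

private lemma dm_div {d z m : ℕ} (hz : z < d) : (z + d * m) / d = m := by
  rw [Nat.add_mul_div_left _ _ (lt_of_le_of_lt (Nat.zero_le z) hz),
    Nat.div_eq_of_lt hz, Nat.zero_add]


private lemma split_div {b t r : ℕ} (hb : b = t * r) (tpos : 0 < t) (m : ℕ) :
    m / t = m % b / t + r * (m / b) := by
  subst hb
  conv_lhs => rw [← Nat.mod_add_div m (t * r)]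
  rw [show m % (t * r) + t * r * (m / (t * r)) =
      m % (t * r) + t * (r * (m / (t * r))) by ring,
    Nat.add_mul_div_left _ _ tpos]

/-- Entrywise description of the support matrix. -/
lemma Pattern.S_apply (π : Pattern) (i : Fin π.rows) (j : Fin π.cols) :
    π.S i j = if (i : ℕ) / π.d / π.b = (j : ℕ) / π.d / π.c ∧ (i : ℕ) % π.d = (j : ℕ) % π.d
      then 1 else 0 := by
  revert i j
  unfold Pattern.rows Pattern.cols
  intro i j
  show ((1 : Matrix (Fin π.a) (Fin π.a) ℕ) ⊗ₖ
      (Matrix.of fun _ _ => (1 : ℕ) : Matrix (Fin π.b) (Fin π.c) ℕ) ⊗ₖ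
      (1 : Matrix (Fin π.d) (Fin π.d) ℕ)) ((kron3Equiv π.a π.b π.d).symm i)
      ((kron3Equiv π.a π.c π.d).symm j) = _
  simp only [Pattern.S, Matrix.reindex_apply, Matrix.submatrix_apply, kron3Equiv,
    Equiv.symm_trans_apply, Equiv.prodCongr_symm, Equiv.refl_symm, Equiv.prodCongr_apply,
    finProdFinEquiv_symm_apply, Prod.map, Equiv.refl_apply, Matrix.kroneckerMap_apply,
    Matrix.of_apply, Matrix.one_apply, Fin.divNat, Fin.modNat, Function.comp_apply]
  simp only [Fin.ext_iff]
  split_ifs <;> simp_all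

lemma S_eq_zero_iff (π : Pattern) (i : Fin π.rows) (j : Fin π.cols) :
    π.S i j = 0 ↔
      ¬((i : ℕ) / π.d / π.b = (j : ℕ) / π.d / π.c ∧ (i : ℕ) % π.d = (j : ℕ) % π.d) := by
  rw [Pattern.S_apply]; split_ifs with h <;> simp [h]

set_option maxHeartbeats 2000000 in
/-- **Lemma.** For a chainable *redundant* pair `(π₁, π₂)`:
(1) `B^{(π₁,π₂)} = D^{π₁*π₂}`, i.e. every matrix supported in `S_{π₁*π₂}` factors as
`X₁X₂` with `Xᵢ ∈ D^{πᵢ}`; and (2) `‖π₁*π₂‖₀ = b₁d₁a₂c₂ < ‖π₁‖₀ + ‖π₂‖₀`. -/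
theorem redundant_pair_collapse (π₁ π₂ : Pattern)
    (h₁ : π₁.Pos) (h₂ : π₂.Pos) (hch : Pattern.Chainable π₁ π₂)
    (hred : RedundantPair π₁ π₂)
    (hdim : π₁.cols = π₂.rows)
    (hr : (π₁ * π₂).rows = π₁.rows) (hc : (π₁ * π₂).cols = π₂.cols) :
    (∀ A : Matrix (Fin π₁.rows) (Fin π₂.cols) ℂ,
      (∀ i j, castMat hr hc (π₁ * π₂).S i j = 0 → A i j = 0) ↔
        ∃ (X₁ : Matrix (Fin π₁.rows) (Fin π₁.cols) ℂ)
          (X₂ : Matrix (Fin π₂.rows) (Fin π₂.cols) ℂ),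
          IsFactor π₁ X₁ ∧ IsFactor π₂ X₂ ∧ A = X₁ * castMat hdim.symm rfl X₂) ∧
    Pattern.norm0 (π₁ * π₂) = π₁.b * π₁.d * (π₂.a * π₂.c) ∧
    Pattern.norm0 (π₁ * π₂) < Pattern.norm0 π₁ + Pattern.norm0 π₂ := by
  obtain ⟨a1p, b1p, c1p, d1p⟩ := h₁
  obtain ⟨a2p, b2p, c2p, d2p⟩ := h₂
  obtain ⟨hA2, hD1, hreq, hrpos, hAdvd, hDdvd⟩ := hch
  obtain ⟨s, hs⟩ := hAdvd
  obtain ⟨t, ht⟩ := hDdvd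
  set r : ℕ := π₁.a * π₁.c / π₂.a with hr_def
  have hac : r * π₂.a = π₁.a * π₁.c := Nat.div_mul_cancel hA2
  have hbd : r * π₁.d = π₂.b * π₂.d := by
    rw [hreq]; exact Nat.div_mul_cancel hD1
  have rpos : 0 < r := hrpos
  have spos : 0 < s := by
    rcases Nat.eq_zero_or_pos s with h | h
    · exfalso; rw [h, Nat.mul_zero] at hs; omega
    · exact h
  have tpos : 0 < t := by
    rcases Nat.eq_zero_or_pos t with h | h
    · exfalso; rw [h, Nat.mul_zero] at ht; omega
    · exact h
  have hc1 : π₁.c = s * r := by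
    have : π₁.a * (s * r) = π₁.a * π₁.c := by rw [← hac, hs]; ring
    exact (Nat.eq_of_mul_eq_mul_left a1p this).symm
  have hb2 : π₂.b = t * r := by
    have : π₂.d * (t * r) = π₂.d * π₂.b := by
      have h' : π₂.d * (t * r) = r * π₁.d := by rw [ht]; ring
      rw [h', hbd]; ring
    exact (Nat.eq_of_mul_eq_mul_left d2p this).symm
  have hPb : (π₁ * π₂).b = π₁.b * t := by
    show π₁.b * π₁.d / π₂.d = π₁.b * t
    rw [ht, show π₁.b * (π₂.d * t) = π₂.d * (π₁.b * t) by ring]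
    exact Nat.mul_div_cancel_left _ d2p
  have hPc : (π₁ * π₂).c = s * π₂.c := by
    show π₂.a * π₂.c / π₁.a = s * π₂.c
    rw [hs, show π₁.a * s * π₂.c = π₁.a * (s * π₂.c) by ring]
    exact Nat.mul_div_cancel_left _ a1p
  have hPd : (π₁ * π₂).d = π₂.d := rfl
  have hnorm : Pattern.norm0 (π₁ * π₂) = π₁.b * π₁.d * (π₂.a * π₂.c) := by
    show (π₁ * π₂).a * (π₁ * π₂).b * (π₁ * π₂).c * (π₁ * π₂).d = _
    rw [hPb, hPc, hPd, show (π₁ * π₂).a = π₁.a from rfl, hs, ht]; ring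
  have hlt : Pattern.norm0 (π₁ * π₂) < Pattern.norm0 π₁ + Pattern.norm0 π₂ := by
    rw [hnorm, Pattern.norm0, Pattern.norm0]
    have e1 : π₁.a * π₁.b * π₁.c * π₁.d = r * π₂.a * (π₁.b * π₁.d) := by
      rw [show π₁.a * π₁.b * π₁.c * π₁.d = π₁.a * π₁.c * (π₁.b * π₁.d) by ring, ← hac]
    have e2 : π₂.a * π₂.b * π₂.c * π₂.d = r * π₁.d * (π₂.a * π₂.c) := by
      rw [show π₂.a * π₂.b * π₂.c * π₂.d = π₂.b * π₂.d * (π₂.a * π₂.c) by ring, ← hbd]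
    rw [e1, e2]
    have hkey : π₁.b * π₂.c < r * π₁.b + r * π₂.c := by
      rcases le_total π₁.b π₂.c with h | h
      · have hbr : π₁.b ≤ r := le_trans (le_of_eq (min_eq_left h).symm) hred
        calc π₁.b * π₂.c < π₁.b * π₂.c + π₁.b * π₁.b := by
              have : 0 < π₁.b * π₁.b := Nat.mul_pos b1p b1p
              omega
          _ = π₁.b * (π₁.b + π₂.c) := by ring
          _ ≤ r * (π₁.b + π₂.c) := Nat.mul_le_mul_right _ hbr
          _ = r * π₁.b + r * π₂.c := by ring
      · have hcr : π₂.c ≤ r := le_trans (le_of_eq (min_eq_right h).symm) hred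
        calc π₁.b * π₂.c < π₁.b * π₂.c + π₂.c * π₂.c := by
              have : 0 < π₂.c * π₂.c := Nat.mul_pos c2p c2p
              omega
          _ = π₂.c * (π₁.b + π₂.c) := by ring
          _ ≤ r * (π₁.b + π₂.c) := Nat.mul_le_mul_right _ hcr
          _ = r * π₁.b + r * π₂.c := by ring
    calc π₁.b * π₁.d * (π₂.a * π₂.c) = π₁.d * π₂.a * (π₁.b * π₂.c) := by ring
      _ < π₁.d * π₂.a * (r * π₁.b + r * π₂.c) :=
          mul_lt_mul_of_pos_left hkey (Nat.mul_pos d1p a2p)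
      _ = r * π₂.a * (π₁.b * π₁.d) + r * π₁.d * (π₂.a * π₂.c) := by ring
  have hdvd21 : π₂.d ∣ π₁.d := ⟨t, ht⟩
  have hSchar : ∀ (i : Fin π₁.rows) (j : Fin π₂.cols),
      castMat hr hc (π₁ * π₂).S i j = 0 ↔
        ¬((i : ℕ) / π₁.d / π₁.b = (j : ℕ) / π₂.d / π₂.c / s ∧
          (i : ℕ) % π₂.d = (j : ℕ) % π₂.d) := by
    intro i j
    show (π₁ * π₂).S (Fin.cast hr.symm i) (Fin.cast hc.symm j) = 0 ↔ _
    rw [S_eq_zero_iff]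
    simp only [Fin.coe_cast, hPb, hPc, hPd]
    have ei : (i : ℕ) / π₂.d / (π₁.b * t) = (i : ℕ) / π₁.d / π₁.b := by
      rw [Nat.div_div_eq_div_mul, Nat.div_div_eq_div_mul]
      congr 1
      rw [ht]; ring
    have ej : (j : ℕ) / π₂.d / (s * π₂.c) = (j : ℕ) / π₂.d / π₂.c / s := by
      rw [Nat.div_div_eq_div_mul (_ / π₂.d), Nat.mul_comm π₂.c s]
    rw [ei, ej]
  have key : ∀ (i j k : ℕ),
      k % π₁.d = i % π₁.d → k / π₁.d / π₁.c = i / π₁.d / π₁.b →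
      k % π₂.d = j % π₂.d → k / π₂.d / π₂.b = j / π₂.d / π₂.c →
      i / π₁.d / π₁.b = j / π₂.d / π₂.c / s ∧ i % π₂.d = j % π₂.d := by
    intro i j k h1 h2 h3 h4
    constructor
    · rw [← h2, ← h4, Nat.div_div_eq_div_mul, Nat.div_div_eq_div_mul,
        Nat.div_div_eq_div_mul]
      congr 1
      rw [hc1, hb2, ht]; ring
    · calc i % π₂.d = i % π₁.d % π₂.d := (Nat.mod_mod_of_dvd i hdvd21).symm
        _ = k % π₁.d % π₂.d := by rw [h1]
        _ = k % π₂.d := Nat.mod_mod_of_dvd k hdvd21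
        _ = j % π₂.d := h3
  refine ⟨fun A => ⟨fun hA => ?_, fun ⟨X₁, X₂, hf1, hf2, hAeq⟩ => ?_⟩, hnorm, hlt⟩
  · -- forward: construct the factorization
    by_cases hbc : π₂.c ≤ π₁.b
    · -- case r ≥ c₂
      have hrc : π₂.c ≤ r := le_trans (le_of_eq (min_eq_right hbc).symm) hred
      have colspos : 0 < π₂.cols := by
        show 0 < π₂.a * π₂.c * π₂.d
        positivity
      refine ⟨Matrix.of fun i k =>
          if (k : ℕ) / π₁.d / π₁.c = (i : ℕ) / π₁.d / π₁.b ∧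
             (k : ℕ) % π₁.d = (i : ℕ) % π₁.d ∧ (k : ℕ) / π₁.d % π₁.c % r < π₂.c then
            A i ⟨((k : ℕ) % π₁.d % π₂.d + π₂.d * ((k : ℕ) / π₁.d % π₁.c % r +
              π₂.c * (s * ((k : ℕ) / π₁.d / π₁.c) + (k : ℕ) / π₁.d % π₁.c / r))) % π₂.cols,
              Nat.mod_lt _ colspos⟩
          else 0,
        Matrix.of fun l j =>
          if (l : ℕ) / π₂.d / π₂.b = (j : ℕ) / π₂.d / π₂.c ∧
             (l : ℕ) % π₂.d = (j : ℕ) % π₂.d ∧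
             (l : ℕ) / π₂.d % π₂.b / t = (j : ℕ) / π₂.d % π₂.c then (1 : ℂ) else 0,
        ?_, ?_, ?_⟩
      · intro i k hS
        rw [S_eq_zero_iff] at hS
        simp only [Matrix.of_apply]
        rw [if_neg]
        intro hcond
        exact hS ⟨hcond.1.symm, hcond.2.1.symm⟩
      · intro l j hS
        rw [S_eq_zero_iff] at hS
        simp only [Matrix.of_apply]
        rw [if_neg]
        intro hcond
        exact hS ⟨hcond.1, hcond.2.1⟩
      · ext i j
        rw [Matrix.mul_apply]
        simp only [castMat, Matrix.of_apply, Fin.coe_cast]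
        by_cases hsupp : (i : ℕ) / π₁.d / π₁.b = (j : ℕ) / π₂.d / π₂.c / s ∧
            (i : ℕ) % π₂.d = (j : ℕ) % π₂.d
        swap
        · rw [hA i j ((hSchar i j).mpr hsupp)]
          symm
          apply Finset.sum_eq_zero
          intro k _
          by_cases h1 : (k : ℕ) / π₁.d / π₁.c = (i : ℕ) / π₁.d / π₁.b ∧
              (k : ℕ) % π₁.d = (i : ℕ) % π₁.d ∧ (k : ℕ) / π₁.d % π₁.c % r < π₂.c
          swap
          · rw [if_neg h1, zero_mul]
          by_cases h2 : (k : ℕ) / π₂.d / π₂.b = (j : ℕ) / π₂.d / π₂.c ∧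
              (k : ℕ) % π₂.d = (j : ℕ) % π₂.d ∧
              (k : ℕ) / π₂.d % π₂.b / t = (j : ℕ) / π₂.d % π₂.c
          swap
          · rw [if_neg h2, mul_zero]
          exact absurd (key (i : ℕ) (j : ℕ) (k : ℕ) h1.2.1 h1.1 h2.2.1 h2.1) hsupp
        · obtain ⟨hx, hz⟩ := hsupp
          have hzi : (i : ℕ) % π₁.d < π₁.d := Nat.mod_lt _ d1p
          have hyj : (j : ℕ) / π₂.d % π₂.c < π₂.c := Nat.mod_lt _ c2p
          have hyjr : (j : ℕ) / π₂.d % π₂.c < r := lt_of_lt_of_le hyj hrc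
          have hxj : (j : ℕ) / π₂.d / π₂.c < π₂.a := by
            rw [Nat.div_div_eq_div_mul, Nat.div_lt_iff_lt_mul (Nat.mul_pos d2p c2p)]
            calc (j : ℕ) < π₂.a * π₂.c * π₂.d := j.isLt
              _ = π₂.a * (π₂.d * π₂.c) := by ring
          set K : ℕ := (i : ℕ) % π₁.d + π₁.d * ((j : ℕ) / π₂.d % π₂.c +
            r * ((j : ℕ) / π₂.d / π₂.c)) with hKdef
          have hm : (j : ℕ) / π₂.d % π₂.c + r * ((j : ℕ) / π₂.d / π₂.c) < r * π₂.a := by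
            calc (j : ℕ) / π₂.d % π₂.c + r * ((j : ℕ) / π₂.d / π₂.c)
                < r + r * ((j : ℕ) / π₂.d / π₂.c) := Nat.add_lt_add_right hyjr _
              _ = r * ((j : ℕ) / π₂.d / π₂.c + 1) := by ring
              _ ≤ r * π₂.a := Nat.mul_le_mul_left _ hxj
          have hK : K < π₁.cols := by
            show K < π₁.a * π₁.c * π₁.d
            rw [hKdef]
            calc (i : ℕ) % π₁.d + π₁.d * ((j : ℕ) / π₂.d % π₂.c + r * ((j : ℕ) / π₂.d / π₂.c))
                < π₁.d + π₁.d * ((j : ℕ) / π₂.d % π₂.c + r * ((j : ℕ) / π₂.d / π₂.c)) :=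
                  Nat.add_lt_add_right hzi _
              _ = π₁.d * ((j : ℕ) / π₂.d % π₂.c + r * ((j : ℕ) / π₂.d / π₂.c) + 1) := by ring
              _ ≤ π₁.d * (r * π₂.a) := Nat.mul_le_mul_left _ hm
              _ = π₁.a * π₁.c * π₁.d := by rw [hac]; ring
          have hK1 : K % π₁.d = (i : ℕ) % π₁.d := dm_mod hzi
          have hK2 : K / π₁.d = (j : ℕ) / π₂.d % π₂.c + r * ((j : ℕ) / π₂.d / π₂.c) :=
            dm_div hzi
          have hxjs : (j : ℕ) / π₂.d / π₂.c % s < s := Nat.mod_lt _ spos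
          have hyks : (j : ℕ) / π₂.d % π₂.c + r * ((j : ℕ) / π₂.d / π₂.c % s) < s * r := by
            calc (j : ℕ) / π₂.d % π₂.c + r * ((j : ℕ) / π₂.d / π₂.c % s)
                < r + r * ((j : ℕ) / π₂.d / π₂.c % s) := Nat.add_lt_add_right hyjr _
              _ = r * ((j : ℕ) / π₂.d / π₂.c % s + 1) := by ring
              _ ≤ r * s := Nat.mul_le_mul_left _ hxjs
              _ = s * r := Nat.mul_comm r s
          have hyk : K / π₁.d % π₁.c =
              (j : ℕ) / π₂.d % π₂.c + r * ((j : ℕ) / π₂.d / π₂.c % s) := by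
            rw [hK2, hc1,
              show (j : ℕ) / π₂.d % π₂.c + r * ((j : ℕ) / π₂.d / π₂.c) =
                (j : ℕ) / π₂.d % π₂.c + r * ((j : ℕ) / π₂.d / π₂.c % s) +
                  s * r * ((j : ℕ) / π₂.d / π₂.c / s) from by
                    conv_lhs => rw [← Nat.mod_add_div ((j : ℕ) / π₂.d / π₂.c) s]
                    ring]
            exact dm_mod hyks
          have hxk : K / π₁.d / π₁.c = (j : ℕ) / π₂.d / π₂.c / s := by
            rw [hc1, Nat.mul_comm s r, ← Nat.div_div_eq_div_mul, hK2]
            congr 1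
            exact dm_div hyjr
          have hcond1 : K / π₁.d / π₁.c = (i : ℕ) / π₁.d / π₁.b := by rw [hxk, ← hx]
          have hy2 : K / π₁.d % π₁.c % r = (j : ℕ) / π₂.d % π₂.c := by
            rw [hyk]; exact dm_mod hyjr
          have hy3 : K / π₁.d % π₁.c / r = (j : ℕ) / π₂.d / π₂.c % s := by
            rw [hyk]; exact dm_div hyjr
          have hKz2 : K % π₂.d = (j : ℕ) % π₂.d := by
            calc K % π₂.d = K % π₁.d % π₂.d := (Nat.mod_mod_of_dvd K hdvd21).symm
              _ = (i : ℕ) % π₁.d % π₂.d := by rw [hK1]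
              _ = (i : ℕ) % π₂.d := Nat.mod_mod_of_dvd _ hdvd21
              _ = (j : ℕ) % π₂.d := hz
          have hcond4 : K / π₂.d / π₂.b = (j : ℕ) / π₂.d / π₂.c := by
            rw [Nat.div_div_eq_div_mul, show π₂.d * π₂.b = π₁.d * r from by rw [hb2, ht]; ring,
              ← Nat.div_div_eq_div_mul, hK2]
            exact dm_div hyjr
          have hw : (i : ℕ) % π₁.d / π₂.d < t := by
            rw [Nat.div_lt_iff_lt_mul d2p]
            calc (i : ℕ) % π₁.d < π₁.d := hzi
              _ = t * π₂.d := by rw [ht]; ring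
          have hKd2 : K / π₂.d = (i : ℕ) % π₁.d / π₂.d +
              t * ((j : ℕ) / π₂.d % π₂.c + r * ((j : ℕ) / π₂.d / π₂.c)) := by
            rw [show K = (i : ℕ) % π₁.d + π₂.d * (t * ((j : ℕ) / π₂.d % π₂.c +
                r * ((j : ℕ) / π₂.d / π₂.c))) from by rw [hKdef, ht]; ring,
              Nat.add_mul_div_left _ _ d2p]
          have hzlt : (i : ℕ) % π₁.d / π₂.d + t * ((j : ℕ) / π₂.d % π₂.c) < t * r := by
            calc (i : ℕ) % π₁.d / π₂.d + t * ((j : ℕ) / π₂.d % π₂.c)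
                < t + t * ((j : ℕ) / π₂.d % π₂.c) := Nat.add_lt_add_right hw _
              _ = t * ((j : ℕ) / π₂.d % π₂.c + 1) := by ring
              _ ≤ t * r := Nat.mul_le_mul_left _ hyjr
          have hyl : K / π₂.d % π₂.b =
              (i : ℕ) % π₁.d / π₂.d + t * ((j : ℕ) / π₂.d % π₂.c) := by
            rw [hKd2, hb2, show (i : ℕ) % π₁.d / π₂.d + t * ((j : ℕ) / π₂.d % π₂.c +
                r * ((j : ℕ) / π₂.d / π₂.c)) =
                (i : ℕ) % π₁.d / π₂.d + t * ((j : ℕ) / π₂.d % π₂.c) +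
                  t * r * ((j : ℕ) / π₂.d / π₂.c) from by ring]
            exact dm_mod hzlt
          have hcond6 : K / π₂.d % π₂.b / t = (j : ℕ) / π₂.d % π₂.c := by
            rw [hyl, Nat.add_mul_div_left _ _ tpos, Nat.div_eq_of_lt hw, Nat.zero_add]
          refine Eq.trans ?_ (Finset.sum_eq_single_of_mem (⟨K, hK⟩ : Fin π₁.cols)
            (Finset.mem_univ _) ?_).symm
          · dsimp only
            rw [if_pos ⟨hcond1, hK1, by rw [hy2]; exact hyj⟩,
              if_pos ⟨hcond4, hKz2, hcond6⟩, mul_one]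
            congr 1
            apply Fin.ext
            show (j : ℕ) = _
            rw [hK1, hy2, hxk, hy3, Nat.mod_mod_of_dvd _ hdvd21, hz,
              Nat.div_add_mod ((j : ℕ) / π₂.d / π₂.c) s,
              Nat.mod_add_div ((j : ℕ) / π₂.d) π₂.c,
              Nat.mod_add_div (j : ℕ) π₂.d]
            exact (Nat.mod_eq_of_lt j.isLt).symm
          · intro k _ hkne
            by_cases h1 : (k : ℕ) / π₁.d / π₁.c = (i : ℕ) / π₁.d / π₁.b ∧
                (k : ℕ) % π₁.d = (i : ℕ) % π₁.d ∧ (k : ℕ) / π₁.d % π₁.c % r < π₂.c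
            swap
            · rw [if_neg h1, zero_mul]
            by_cases h2 : (k : ℕ) / π₂.d / π₂.b = (j : ℕ) / π₂.d / π₂.c ∧
                (k : ℕ) % π₂.d = (j : ℕ) % π₂.d ∧
                (k : ℕ) / π₂.d % π₂.b / t = (j : ℕ) / π₂.d % π₂.c
            swap
            · rw [if_neg h2, mul_zero]
            exfalso
            apply hkne
            apply Fin.ext
            show (k : ℕ) = K
            have e2 : (k : ℕ) / π₁.d = (k : ℕ) / π₂.d / t := by
              rw [Nat.div_div_eq_div_mul, ht]
            calc (k : ℕ) = (k : ℕ) % π₁.d + π₁.d * ((k : ℕ) / π₁.d) :=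
                (Nat.mod_add_div _ _).symm
              _ = (i : ℕ) % π₁.d + π₁.d * ((j : ℕ) / π₂.d % π₂.c +
                  r * ((j : ℕ) / π₂.d / π₂.c)) := by
                rw [h1.2.1, e2, split_div hb2 tpos ((k : ℕ) / π₂.d), h2.2.2, h2.1]
              _ = K := hKdef.symm
    · -- case r ≥ b₁
      have hbc' : π₁.b ≤ π₂.c := le_of_not_ge hbc
      have hrb : π₁.b ≤ r := le_trans (le_of_eq (min_eq_left hbc').symm) hred
      have rowspos : 0 < π₁.rows := by
        show 0 < π₁.a * π₁.b * π₁.d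
        positivity
      refine ⟨Matrix.of fun i k =>
          if (k : ℕ) / π₁.d / π₁.c = (i : ℕ) / π₁.d / π₁.b ∧
             (k : ℕ) % π₁.d = (i : ℕ) % π₁.d ∧
             (k : ℕ) / π₁.d % π₁.c % r = (i : ℕ) / π₁.d % π₁.b then (1 : ℂ) else 0,
        Matrix.of fun l j =>
          if (l : ℕ) / π₂.d / π₂.b = (j : ℕ) / π₂.d / π₂.c ∧
             (l : ℕ) % π₂.d = (j : ℕ) % π₂.d ∧ (l : ℕ) / π₂.d % π₂.b / t < π₁.b then
            A ⟨((l : ℕ) / π₂.d % π₂.b % t * π₂.d + (l : ℕ) % π₂.d +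
              π₁.d * ((l : ℕ) / π₂.d % π₂.b / t +
                π₁.b * ((l : ℕ) / π₂.d / π₂.b / s))) % π₁.rows,
              Nat.mod_lt _ rowspos⟩ j
          else 0, ?_, ?_, ?_⟩
      · intro i k hS
        rw [S_eq_zero_iff] at hS
        simp only [Matrix.of_apply]
        rw [if_neg]
        intro hcond
        exact hS ⟨hcond.1.symm, hcond.2.1.symm⟩
      · intro l j hS
        rw [S_eq_zero_iff] at hS
        simp only [Matrix.of_apply]
        rw [if_neg]
        intro hcond
        exact hS ⟨hcond.1, hcond.2.1⟩
      · ext i j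
        rw [Matrix.mul_apply]
        simp only [castMat, Matrix.of_apply, Fin.coe_cast]
        by_cases hsupp : (i : ℕ) / π₁.d / π₁.b = (j : ℕ) / π₂.d / π₂.c / s ∧
            (i : ℕ) % π₂.d = (j : ℕ) % π₂.d
        swap
        · rw [hA i j ((hSchar i j).mpr hsupp)]
          symm
          apply Finset.sum_eq_zero
          intro k _
          by_cases h1 : (k : ℕ) / π₁.d / π₁.c = (i : ℕ) / π₁.d / π₁.b ∧
              (k : ℕ) % π₁.d = (i : ℕ) % π₁.d ∧
              (k : ℕ) / π₁.d % π₁.c % r = (i : ℕ) / π₁.d % π₁.b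
          swap
          · rw [if_neg h1, zero_mul]
          by_cases h2 : (k : ℕ) / π₂.d / π₂.b = (j : ℕ) / π₂.d / π₂.c ∧
              (k : ℕ) % π₂.d = (j : ℕ) % π₂.d ∧ (k : ℕ) / π₂.d % π₂.b / t < π₁.b
          swap
          · rw [if_neg h2, mul_zero]
          exact absurd (key (i : ℕ) (j : ℕ) (k : ℕ) h1.2.1 h1.1 h2.2.1 h2.1) hsupp
        · obtain ⟨hx, hz⟩ := hsupp
          have hzi : (i : ℕ) % π₁.d < π₁.d := Nat.mod_lt _ d1p
          have hyi : (i : ℕ) / π₁.d % π₁.b < π₁.b := Nat.mod_lt _ b1p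
          have hyir : (i : ℕ) / π₁.d % π₁.b < r := lt_of_lt_of_le hyi hrb
          have hxi : (i : ℕ) / π₁.d / π₁.b < π₁.a := by
            rw [Nat.div_div_eq_div_mul, Nat.div_lt_iff_lt_mul (Nat.mul_pos d1p b1p)]
            calc (i : ℕ) < π₁.a * π₁.b * π₁.d := i.isLt
              _ = π₁.a * (π₁.d * π₁.b) := by ring
          have hxjs : (j : ℕ) / π₂.d / π₂.c % s < s := Nat.mod_lt _ spos
          set K : ℕ := (i : ℕ) % π₁.d + π₁.d * ((i : ℕ) / π₁.d % π₁.b +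
            r * ((j : ℕ) / π₂.d / π₂.c % s) + s * r * ((i : ℕ) / π₁.d / π₁.b)) with hKdef
          have hyks : (i : ℕ) / π₁.d % π₁.b + r * ((j : ℕ) / π₂.d / π₂.c % s) < s * r := by
            calc (i : ℕ) / π₁.d % π₁.b + r * ((j : ℕ) / π₂.d / π₂.c % s)
                < r + r * ((j : ℕ) / π₂.d / π₂.c % s) := Nat.add_lt_add_right hyir _
              _ = r * ((j : ℕ) / π₂.d / π₂.c % s + 1) := by ring
              _ ≤ r * s := Nat.mul_le_mul_left _ hxjs
              _ = s * r := Nat.mul_comm r s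
          have hm : (i : ℕ) / π₁.d % π₁.b + r * ((j : ℕ) / π₂.d / π₂.c % s) +
              s * r * ((i : ℕ) / π₁.d / π₁.b) < s * r * π₁.a := by
            calc (i : ℕ) / π₁.d % π₁.b + r * ((j : ℕ) / π₂.d / π₂.c % s) +
                s * r * ((i : ℕ) / π₁.d / π₁.b)
                < s * r + s * r * ((i : ℕ) / π₁.d / π₁.b) := Nat.add_lt_add_right hyks _
              _ = s * r * ((i : ℕ) / π₁.d / π₁.b + 1) := by ring
              _ ≤ s * r * π₁.a := Nat.mul_le_mul_left _ hxi
          have hK : K < π₁.cols := by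
            show K < π₁.a * π₁.c * π₁.d
            rw [hKdef]
            calc (i : ℕ) % π₁.d + π₁.d * ((i : ℕ) / π₁.d % π₁.b +
                r * ((j : ℕ) / π₂.d / π₂.c % s) + s * r * ((i : ℕ) / π₁.d / π₁.b))
                < π₁.d + π₁.d * ((i : ℕ) / π₁.d % π₁.b +
                  r * ((j : ℕ) / π₂.d / π₂.c % s) + s * r * ((i : ℕ) / π₁.d / π₁.b)) :=
                  Nat.add_lt_add_right hzi _
              _ = π₁.d * ((i : ℕ) / π₁.d % π₁.b + r * ((j : ℕ) / π₂.d / π₂.c % s) +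
                  s * r * ((i : ℕ) / π₁.d / π₁.b) + 1) := by ring
              _ ≤ π₁.d * (s * r * π₁.a) := Nat.mul_le_mul_left _ hm
              _ = π₁.a * π₁.c * π₁.d := by rw [hc1]; ring
          have hK1 : K % π₁.d = (i : ℕ) % π₁.d := dm_mod hzi
          have hK2 : K / π₁.d = (i : ℕ) / π₁.d % π₁.b +
              r * ((j : ℕ) / π₂.d / π₂.c % s) + s * r * ((i : ℕ) / π₁.d / π₁.b) :=
            dm_div hzi
          have hyk : K / π₁.d % π₁.c =
              (i : ℕ) / π₁.d % π₁.b + r * ((j : ℕ) / π₂.d / π₂.c % s) := by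
            rw [hK2, hc1]; exact dm_mod hyks
          have hcond1 : K / π₁.d / π₁.c = (i : ℕ) / π₁.d / π₁.b := by
            rw [hK2, hc1]; exact dm_div hyks
          have hcond3 : K / π₁.d % π₁.c % r = (i : ℕ) / π₁.d % π₁.b := by
            rw [hyk]; exact dm_mod hyir
          have hKz2 : K % π₂.d = (j : ℕ) % π₂.d := by
            calc K % π₂.d = K % π₁.d % π₂.d := (Nat.mod_mod_of_dvd K hdvd21).symm
              _ = (i : ℕ) % π₁.d % π₂.d := by rw [hK1]
              _ = (i : ℕ) % π₂.d := Nat.mod_mod_of_dvd _ hdvd21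
              _ = (j : ℕ) % π₂.d := hz
          have hcond4 : K / π₂.d / π₂.b = (j : ℕ) / π₂.d / π₂.c := by
            rw [Nat.div_div_eq_div_mul, show π₂.d * π₂.b = π₁.d * r from by rw [hb2, ht]; ring,
              ← Nat.div_div_eq_div_mul, hK2,
              show (i : ℕ) / π₁.d % π₁.b + r * ((j : ℕ) / π₂.d / π₂.c % s) +
                s * r * ((i : ℕ) / π₁.d / π₁.b) =
                (i : ℕ) / π₁.d % π₁.b + r * ((j : ℕ) / π₂.d / π₂.c % s +
                  s * ((i : ℕ) / π₁.d / π₁.b)) from by ring,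
              Nat.add_mul_div_left _ _ rpos, Nat.div_eq_of_lt hyir, Nat.zero_add, hx]
            exact Nat.mod_add_div _ s
          have hw : (i : ℕ) % π₁.d / π₂.d < t := by
            rw [Nat.div_lt_iff_lt_mul d2p]
            calc (i : ℕ) % π₁.d < π₁.d := hzi
              _ = t * π₂.d := by rw [ht]; ring
          have hKd2 : K / π₂.d = (i : ℕ) % π₁.d / π₂.d +
              t * ((i : ℕ) / π₁.d % π₁.b + r * ((j : ℕ) / π₂.d / π₂.c % s) +
                s * r * ((i : ℕ) / π₁.d / π₁.b)) := by
            rw [show K = (i : ℕ) % π₁.d + π₂.d * (t * ((i : ℕ) / π₁.d % π₁.b +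
                r * ((j : ℕ) / π₂.d / π₂.c % s) + s * r * ((i : ℕ) / π₁.d / π₁.b)))
                from by rw [hKdef, ht]; ring,
              Nat.add_mul_div_left _ _ d2p]
          have hzlt : (i : ℕ) % π₁.d / π₂.d + t * ((i : ℕ) / π₁.d % π₁.b) < t * r := by
            calc (i : ℕ) % π₁.d / π₂.d + t * ((i : ℕ) / π₁.d % π₁.b)
                < t + t * ((i : ℕ) / π₁.d % π₁.b) := Nat.add_lt_add_right hw _
              _ = t * ((i : ℕ) / π₁.d % π₁.b + 1) := by ring
              _ ≤ t * r := Nat.mul_le_mul_left _ hyir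
          have hyl : K / π₂.d % π₂.b =
              (i : ℕ) % π₁.d / π₂.d + t * ((i : ℕ) / π₁.d % π₁.b) := by
            rw [hKd2, hb2, show (i : ℕ) % π₁.d / π₂.d + t * ((i : ℕ) / π₁.d % π₁.b +
                r * ((j : ℕ) / π₂.d / π₂.c % s) + s * r * ((i : ℕ) / π₁.d / π₁.b)) =
                (i : ℕ) % π₁.d / π₂.d + t * ((i : ℕ) / π₁.d % π₁.b) +
                  t * r * ((j : ℕ) / π₂.d / π₂.c % s + s * ((i : ℕ) / π₁.d / π₁.b))
                from by ring]
            exact dm_mod hzlt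
          have hylt : K / π₂.d % π₂.b / t = (i : ℕ) / π₁.d % π₁.b := by
            rw [hyl, Nat.add_mul_div_left _ _ tpos, Nat.div_eq_of_lt hw, Nat.zero_add]
          have hwv : K / π₂.d % π₂.b % t = (i : ℕ) % π₁.d / π₂.d := by
            rw [hyl]; exact dm_mod hw
          have hxs : K / π₂.d / π₂.b / s = (i : ℕ) / π₁.d / π₁.b := by
            rw [hcond4]; exact hx.symm
          refine Eq.trans ?_ (Finset.sum_eq_single_of_mem (⟨K, hK⟩ : Fin π₁.cols)
            (Finset.mem_univ _) ?_).symm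
          · dsimp only
            rw [if_pos ⟨hcond1, hK1, hcond3⟩,
              if_pos ⟨hcond4, hKz2, by rw [hylt]; exact hyi⟩, one_mul]
            congr 1
            apply Fin.ext
            show (i : ℕ) = (K / π₂.d % π₂.b % t * π₂.d + K % π₂.d +
              π₁.d * (K / π₂.d % π₂.b / t + π₁.b * (K / π₂.d / π₂.b / s))) % π₁.rows
            rw [hwv, hKz2, hylt, hxs, ← hz, Nat.mod_mod_of_dvd (i : ℕ) hdvd21 |>.symm]
            rw [Nat.mod_add_div ((i : ℕ) / π₁.d) π₁.b,
              Nat.mul_comm ((i : ℕ) % π₁.d / π₂.d) π₂.d,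
              Nat.div_add_mod ((i : ℕ) % π₁.d) π₂.d,
              Nat.mod_add_div (i : ℕ) π₁.d]
            exact (Nat.mod_eq_of_lt i.isLt).symm
          · intro k _ hkne
            by_cases h1 : (k : ℕ) / π₁.d / π₁.c = (i : ℕ) / π₁.d / π₁.b ∧
                (k : ℕ) % π₁.d = (i : ℕ) % π₁.d ∧
                (k : ℕ) / π₁.d % π₁.c % r = (i : ℕ) / π₁.d % π₁.b
            swap
            · rw [if_neg h1, zero_mul]
            by_cases h2 : (k : ℕ) / π₂.d / π₂.b = (j : ℕ) / π₂.d / π₂.c ∧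
                (k : ℕ) % π₂.d = (j : ℕ) % π₂.d ∧ (k : ℕ) / π₂.d % π₂.b / t < π₁.b
            swap
            · rw [if_neg h2, mul_zero]
            exfalso
            apply hkne
            apply Fin.ext
            show (k : ℕ) = K
            have e4 : (k : ℕ) / π₂.d / π₂.b = (k : ℕ) / π₁.d / r := by
              rw [Nat.div_div_eq_div_mul, Nat.div_div_eq_div_mul]
              congr 1
              rw [hb2, ht]; ring
            have e5 : (k : ℕ) / π₁.d / r =
                (k : ℕ) / π₁.d % π₁.c / r + s * ((k : ℕ) / π₁.d / π₁.c) := by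
              conv_lhs => rw [← Nat.mod_add_div ((k : ℕ) / π₁.d) π₁.c]
              rw [show π₁.c * ((k : ℕ) / π₁.d / π₁.c) =
                  r * (s * ((k : ℕ) / π₁.d / π₁.c)) from by rw [hc1]; ring,
                Nat.add_mul_div_left _ _ rpos]
            have hq : (k : ℕ) / π₁.d % π₁.c / r < s := by
              rw [Nat.div_lt_iff_lt_mul rpos]
              calc (k : ℕ) / π₁.d % π₁.c < π₁.c := Nat.mod_lt _ c1p
                _ = s * r := hc1
            have hxq : (j : ℕ) / π₂.d / π₂.c % s = (k : ℕ) / π₁.d % π₁.c / r := by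
              rw [← h2.1, e4, e5]
              exact dm_mod hq
            have eyk : (k : ℕ) / π₁.d % π₁.c =
                (i : ℕ) / π₁.d % π₁.b + r * ((j : ℕ) / π₂.d / π₂.c % s) := by
              conv_lhs => rw [← Nat.mod_add_div ((k : ℕ) / π₁.d % π₁.c) r]
              rw [h1.2.2, ← hxq]
            calc (k : ℕ) = (k : ℕ) % π₁.d + π₁.d * ((k : ℕ) / π₁.d) :=
                (Nat.mod_add_div _ _).symm
              _ = (i : ℕ) % π₁.d + π₁.d * ((i : ℕ) / π₁.d % π₁.b +
                  r * ((j : ℕ) / π₂.d / π₂.c % s) + s * r * ((i : ℕ) / π₁.d / π₁.b)) := by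
                conv_lhs => rw [← Nat.mod_add_div ((k : ℕ) / π₁.d) π₁.c]
                rw [h1.2.1, eyk, h1.1, hc1]
              _ = K := hKdef.symm
  · -- converse: a product of factors is supported in the product pattern
    intro i j hS
    rw [hAeq, Matrix.mul_apply]
    apply Finset.sum_eq_zero
    intro k _
    by_cases h1 : π₁.S i k = 0
    · rw [hf1 i k h1, zero_mul]
    by_cases h2 : π₂.S (Fin.cast hdim k) j = 0
    · have : castMat hdim.symm rfl X₂ k j = 0 := hf2 _ _ h2
      rw [this, mul_zero]
    exfalso
    simp only [S_eq_zero_iff, not_not] at h1 h2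
    simp only [Fin.coe_cast] at h2
    exact (hSchar i j).mp hS (key i j k h1.2.symm h1.1.symm h2.2 h2.1)
end

section
/- Let β = (π_ℓ)_{ℓ=1}^L be a chainable architecture. Then there exist an integer p ≥ 1 and indices 0 = ℓ₀ < ℓ₁ < ⋯ < ℓ_p = L such that the architecture β' := (π_{ℓ_{k−1}+1} * ⋯ * π_{ℓ_k})_{k=1}^p is chainable and non-redundant, B^{β'} = B^β, and ‖β'‖₀ ≤ ‖β‖₀ (where any architecture of depth 1 is by convention non-redundant). -/
open scoped Kronecker

/-- The support matrix `S_π`, extended by zero to an `ℕ × ℕ`-indexed array. -/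
def SpatN (π : Pattern) : ℕ → ℕ → ℕ := fun i j =>
  if h : i < π.rows ∧ j < π.cols then π.S ⟨i, h.1⟩ ⟨j, h.2⟩ else 0

/-- `X` is (the extension by zero of) a `π`-factor: it vanishes outside the support of `S_π`. -/
def IsFactorN (π : Pattern) (X : ℕ → ℕ → ℂ) : Prop :=
  ∀ i j, SpatN π i j = 0 → X i j = 0

/-- Product of matrices encoded as finitely supported `ℕ × ℕ`-indexed arrays. -/
noncomputable def nmul (f g : ℕ → ℕ → ℂ) : ℕ → ℕ → ℂ := fun i j => ∑' k, f i k * g k j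

/-- `nprod X k = X 0 * X 1 * ⋯ * X k`. -/
noncomputable def nprod (X : ℕ → ℕ → ℕ → ℂ) : ℕ → ℕ → ℕ → ℂ
  | 0 => X 0
  | k + 1 => nmul (nprod X k) (X (k + 1))

/-- Frobenius norm. -/
noncomputable def nfrob (f : ℕ → ℕ → ℂ) : ℝ := Real.sqrt (∑' i, ∑' j, ‖f i j‖ ^ 2)

/-- `A` is (the extension by zero of) a matrix of size `m × n`. -/
def SuppIn (m n : ℕ) (A : ℕ → ℕ → ℂ) : Prop := ∀ i j, A i j ≠ 0 → i < m ∧ j < n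

/-- The set `B^β` of butterfly matrices for the architecture `β = (π 0, …, π (L-1))`. -/
def Bset (π : ℕ → Pattern) (L : ℕ) : Set (ℕ → ℕ → ℂ) :=
  { M | ∃ X : ℕ → ℕ → ℕ → ℂ, (∀ ℓ < L, IsFactorN (π ℓ) (X ℓ)) ∧ M = nprod X (L - 1) }

/-- Partial products of patterns: `pprod π q k = π q * π (q+1) * ⋯ * π (q+k)`. -/
def pprod (π : ℕ → Pattern) (q : ℕ) : ℕ → Pattern
  | 0 => π q
  | k + 1 => pprod π q k * π (q + k + 1)

section Aux

lemma mod_of {δ d : ℕ} (m : ℕ) (hδ : δ < d) : (δ + d * m) % d = δ := by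
  rw [Nat.add_mul_mod_self_left, Nat.mod_eq_of_lt hδ]

lemma div_of {δ d : ℕ} (m : ℕ) (hδ : δ < d) : (δ + d * m) / d = m := by
  rw [Nat.add_mul_div_left _ _ (Nat.zero_lt_of_lt hδ), Nat.div_eq_of_lt hδ, Nat.zero_add]

lemma div2_of {δ d β b : ℕ} (m : ℕ) (hδ : δ < d) (hβ : β < b) :
    (δ + d * (β + b * m)) / (b * d) = m := by
  rw [mul_comm b d, ← Nat.div_div_eq_div_mul, div_of _ hδ, div_of _ hβ]

lemma mid_of {δ d β b : ℕ} (m : ℕ) (hδ : δ < d) : (δ + d * (β + b * m)) / d % b = β % b := by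
  rw [div_of _ hδ, Nat.add_mul_mod_self_left]

lemma kron3_val {a b d : ℕ} (x : (Fin a × Fin b) × Fin d) :
    (kron3Equiv a b d x : ℕ) = x.2.1 + d * (x.1.2.1 + b * x.1.1.1) := by
  simp [kron3Equiv]

lemma lt_decomp {a b d i : ℕ} (hb : 0 < b) (hd : 0 < d) (hi : i < a * b * d) :
    i % d < d ∧ i / d % b < b ∧ i / (b * d) < a ∧
      i = i % d + d * (i / d % b + b * (i / (b * d))) := by
  refine ⟨Nat.mod_lt _ hd, Nat.mod_lt _ hb, ?_, ?_⟩
  · rw [Nat.div_lt_iff_lt_mul (Nat.mul_pos hb hd)]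
    linarith [hi, mul_assoc a b d]
  · rw [mul_comm b d, ← Nat.div_div_eq_div_mul]
    conv_lhs => rw [← Nat.mod_add_div i d, ← Nat.mod_add_div (i/d) b]

lemma spatN_eq (π : Pattern) (hp : π.Pos) (i j : ℕ) :
    SpatN π i j = if i < π.rows ∧ j < π.cols ∧ i / (π.b * π.d) = j / (π.c * π.d) ∧
      i % π.d = j % π.d then 1 else 0 := by
  obtain ⟨ha, hb, hc, hd⟩ := hp
  unfold SpatN
  split
  case isFalse h => rw [if_neg (by tauto)]
  case isTrue h =>
    obtain ⟨hi, hj⟩ := h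
    obtain ⟨hi1, hi2, hi3, hi4⟩ := lt_decomp hb hd hi
    obtain ⟨hj1, hj2, hj3, hj4⟩ := lt_decomp hc hd hj
    have e1 : (⟨i, hi⟩ : Fin π.rows) =
        kron3Equiv π.a π.b π.d ((⟨i / (π.b * π.d), hi3⟩, ⟨i / π.d % π.b, hi2⟩), ⟨i % π.d, hi1⟩) := by
      apply Fin.ext; rw [kron3_val]; exact hi4
    have e2 : (⟨j, hj⟩ : Fin π.cols) =
        kron3Equiv π.a π.c π.d ((⟨j / (π.c * π.d), hj3⟩, ⟨j / π.d % π.c, hj2⟩), ⟨j % π.d, hj1⟩) := by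
      apply Fin.ext; rw [kron3_val]; exact hj4
    rw [e1, e2]
    unfold Pattern.S
    rw [Matrix.reindex_apply, Matrix.submatrix_apply, Equiv.symm_apply_apply,
      Equiv.symm_apply_apply]
    simp only [Matrix.kroneckerMap_apply, Matrix.one_apply, Matrix.of_apply]
    by_cases h3 : i / (π.b * π.d) = j / (π.c * π.d) <;> by_cases h4 : i % π.d = j % π.d <;>
      simp [Fin.ext_iff, h3, h4, hi, hj]

lemma spatN_ne (π : Pattern) (hp : π.Pos) (i j : ℕ) :
    SpatN π i j ≠ 0 ↔ i < π.rows ∧ j < π.cols ∧ i / (π.b * π.d) = j / (π.c * π.d) ∧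
      i % π.d = j % π.d := by
  rw [spatN_eq π hp i j]; split <;> simp_all

lemma isFactorN_suppIn {π : Pattern} {X : ℕ → ℕ → ℂ} (hp : π.Pos) (h : IsFactorN π X) :
    SuppIn π.rows π.cols X := by
  intro i j hX
  by_contra hc
  have h0 : SpatN π i j = 0 := by
    rw [spatN_eq π hp i j, if_neg (by tauto)]
  exact hX (h i j h0)

lemma pattern_mul_def (π₁ π₂ : Pattern) :
    π₁ * π₂ = ⟨π₁.a, π₁.b * π₁.d / π₂.d, π₂.a * π₂.c / π₁.a, π₂.d⟩ := rfl

open Pattern in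
lemma chain_struct {π₁ π₂ : Pattern} (h1 : π₁.Pos) (h2 : π₂.Pos) (hc : Chainable π₁ π₂) :
    ∃ e f r : ℕ, 0 < e ∧ 0 < f ∧ 0 < r ∧ π₂.a = π₁.a * e ∧ π₁.d = π₂.d * f ∧
      π₁.c = e * r ∧ π₂.b = r * f ∧ π₁ * π₂ = ⟨π₁.a, π₁.b * f, e * π₂.c, π₂.d⟩ ∧
      rk π₁ π₂ = r := by
  obtain ⟨ha1, hb1, hc1, hd1⟩ := h1
  obtain ⟨ha2, hb2, hc2, hd2⟩ := h2
  obtain ⟨c1, c2, c3, c4, c5, c6⟩ := hc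
  refine ⟨π₂.a / π₁.a, π₁.d / π₂.d, π₁.a * π₁.c / π₂.a, ?_, ?_, c4, ?_, ?_, ?_, ?_, ?_, rfl⟩
  · exact Nat.div_pos (Nat.le_of_dvd ha2 c5) ha1
  · exact Nat.div_pos (Nat.le_of_dvd hd1 c6) hd2
  · rw [Nat.mul_div_cancel' c5]
  · rw [Nat.mul_div_cancel' c6]
  · -- c₁ = e * r
    have h : π₁.a * π₁.c = π₁.a * (π₂.a / π₁.a * (π₁.a * π₁.c / π₂.a)) := by
      rw [← mul_assoc, Nat.mul_div_cancel' c5, Nat.mul_div_cancel' c1]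
    exact Nat.eq_of_mul_eq_mul_left ha1 h
  · -- b₂ = r * f
    have h : π₂.b * π₂.d = (π₁.a * π₁.c / π₂.a * (π₁.d / π₂.d)) * π₂.d := by
      rw [mul_assoc, mul_comm (π₁.d / π₂.d), Nat.mul_div_cancel' c6, c3, Nat.div_mul_cancel c2]
    exact Nat.eq_of_mul_eq_mul_right hd2 h
  · -- product formula
    rw [pattern_mul_def]
    have e1 : π₁.b * π₁.d / π₂.d = π₁.b * (π₁.d / π₂.d) := by
      rw [Nat.mul_div_assoc _ c6]
    have e2 : π₂.a * π₂.c / π₁.a = π₂.a / π₁.a * π₂.c := by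
      rw [mul_comm π₂.a, Nat.mul_div_assoc _ c5, mul_comm]
    rw [e1, e2]

open Pattern in
lemma merged_pos {π₁ π₂ : Pattern} (h1 : π₁.Pos) (h2 : π₂.Pos) (hc : Chainable π₁ π₂) :
    (π₁ * π₂).Pos := by
  obtain ⟨e, f, r, he, hf, hr, q1, q2, q3, q4, q5, q6⟩ := chain_struct h1 h2 hc
  rw [q5]
  exact ⟨h1.1, Nat.mul_pos h1.2.1 hf, Nat.mul_pos he h2.2.2.1, h2.2.2.2⟩

open Pattern in
lemma merged_norm0 {π₁ π₂ : Pattern} (h1 : π₁.Pos) (h2 : π₂.Pos) (hc : Chainable π₁ π₂)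
    (hred : RedundantPair π₁ π₂) : (π₁ * π₂).norm0 ≤ π₁.norm0 + π₂.norm0 := by
  obtain ⟨e, f, r, he, hf, hr, q1, q2, q3, q4, q5, q6⟩ := chain_struct h1 h2 hc
  rw [RedundantPair, q6] at hred
  rw [q5]
  unfold Pattern.norm0
  simp only
  rcases min_le_iff.mp hred with h | h
  · -- b₁ ≤ r : merged ≤ norm π₂
    have : π₁.a * (π₁.b * f) * (e * π₂.c) * π₂.d ≤ π₂.a * π₂.b * π₂.c * π₂.d := by
      rw [q1, q4]
      calc π₁.a * (π₁.b * f) * (e * π₂.c) * π₂.d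
          = (π₁.a * e) * (π₁.b * f) * π₂.c * π₂.d := by ring
        _ ≤ (π₁.a * e) * (r * f) * π₂.c * π₂.d := by
            have : π₁.b * f ≤ r * f := Nat.mul_le_mul_right f h
            exact Nat.mul_le_mul_right _ (Nat.mul_le_mul_right _ (Nat.mul_le_mul_left _ this))
    exact le_trans this (Nat.le_add_left _ _)
  · -- c₂ ≤ r : merged ≤ norm π₁
    have : π₁.a * (π₁.b * f) * (e * π₂.c) * π₂.d ≤ π₁.a * π₁.b * π₁.c * π₁.d := by
      rw [q2, q3]
      calc π₁.a * (π₁.b * f) * (e * π₂.c) * π₂.d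
          = π₁.a * π₁.b * (e * π₂.c) * (π₂.d * f) := by ring
        _ ≤ π₁.a * π₁.b * (e * r) * (π₂.d * f) := by
            have : e * π₂.c ≤ e * r := Nat.mul_le_mul_left e h
            exact Nat.mul_le_mul_right _ (Nat.mul_le_mul_left _ this)
    exact le_trans this (Nat.le_add_right _ _)

open Pattern in
lemma chainable_mul_right {π₀ π₁ π₂ : Pattern} (h0 : π₀.Pos) (h1 : π₁.Pos) (h2 : π₂.Pos)
    (hc0 : Chainable π₀ π₁) (hc1 : Chainable π₁ π₂) : Chainable π₀ (π₁ * π₂) := by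
  obtain ⟨e, f, r, he, hf, hr, q1, q2, q3, q4, q5, q6⟩ := chain_struct h1 h2 hc1
  obtain ⟨c1, c2, c3, c4, c5, c6⟩ := hc0
  rw [q5]
  have key : π₁.b * f * π₂.d = π₁.b * π₁.d := by rw [q2]; ring
  refine ⟨c1, ?_, ?_, c4, c5, ?_⟩
  · show π₀.d ∣ π₁.b * f * π₂.d
    rw [key]; exact c2
  · show π₀.a * π₀.c / π₁.a = π₁.b * f * π₂.d / π₀.d
    rw [key]; exact c3
  · show π₂.d ∣ π₀.d
    exact dvd_trans ⟨f, q2⟩ c6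

open Pattern in
lemma chainable_mul_left {π₁ π₂ π₃ : Pattern} (h1 : π₁.Pos) (h2 : π₂.Pos) (h3 : π₃.Pos)
    (hc1 : Chainable π₁ π₂) (hc2 : Chainable π₂ π₃) : Chainable (π₁ * π₂) π₃ := by
  obtain ⟨e, f, r, he, hf, hr, q1, q2, q3, q4, q5, q6⟩ := chain_struct h1 h2 hc1
  obtain ⟨c1, c2, c3, c4, c5, c6⟩ := hc2
  rw [q5]
  have hac : π₁.a * (e * π₂.c) = π₂.a * π₂.c := by rw [q1]; ring
  refine ⟨?_, c2, ?_, ?_, ?_, c6⟩ <;> simp only [hac]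
  · exact c1
  · exact c3
  · exact c4
  · exact dvd_trans ⟨e, q1⟩ c5

open Pattern in
lemma pattern_mul_assoc {π₁ π₂ π₃ : Pattern} (h1 : π₁.Pos) (h2 : π₂.Pos) (h3 : π₃.Pos)
    (hc1 : Chainable π₁ π₂) (hc2 : Chainable π₂ π₃) :
    π₁ * π₂ * π₃ = π₁ * (π₂ * π₃) := by
  obtain ⟨e, f, r, he, hf, hr, q1, q2, q3, q4, q5, q6⟩ := chain_struct h1 h2 hc1
  obtain ⟨e', f', r', he', hf', hr', q1', q2', q3', q4', q5', q6'⟩ := chain_struct h2 h3 hc2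
  rw [q5, q5', pattern_mul_def, pattern_mul_def]
  simp only
  congr 1
  · -- b component
    have : π₁.b * f * π₂.d = π₁.b * π₁.d := by rw [q2]; ring
    rw [this]
  · -- c component
    have : π₃.a * π₃.c = π₂.a * (e' * π₃.c) := by rw [q1']; ring
    rw [this]

open Pattern in
lemma chain_a_dvd (π : ℕ → Pattern) (q : ℕ) :
    ∀ n, (∀ m, q ≤ m → m + 1 ≤ q + n → Chainable (π m) (π (m + 1))) →
      (π q).a ∣ (π (q + n)).a ∧ (π (q + n)).d ∣ (π q).d := by
  intro n
  induction n with
  | zero => intro _; exact ⟨dvd_rfl, dvd_rfl⟩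
  | succ n ih =>
    intro h
    have hc := h (q + n) (Nat.le_add_right _ _) le_rfl
    obtain ⟨ha, hd⟩ := ih (fun m hm hm' => h m hm (le_trans hm' (Nat.le_succ _)))
    exact ⟨dvd_trans ha hc.2.2.2.2.1, dvd_trans hc.2.2.2.2.2 hd⟩

open Pattern in
lemma pprod_struct (π : ℕ → Pattern) (q : ℕ) :
    ∀ n, (∀ m, q ≤ m → m ≤ q + n → (π m).Pos) →
      (∀ m, q ≤ m → m + 1 ≤ q + n → Chainable (π m) (π (m + 1))) →
      (pprod π q n).Pos ∧ (pprod π q n).a = (π q).a ∧ (pprod π q n).d = (π (q + n)).d ∧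
        (pprod π q n).a * (pprod π q n).c = (π (q + n)).a * (π (q + n)).c ∧
        (pprod π q n).b * (pprod π q n).d = (π q).b * (π q).d := by
  intro n
  induction n with
  | zero => intro hp _; exact ⟨hp q le_rfl le_rfl, rfl, rfl, rfl, rfl⟩
  | succ n ih =>
    intro hp hc
    obtain ⟨P, A, D, AC, BD⟩ := ih (fun m hm hm' => hp m hm (le_trans hm' (Nat.le_succ _)))
      (fun m hm hm' => hc m hm (le_trans hm' (Nat.le_succ _)))
    set σ := pprod π q n with hσ
    set τ := π (q + n + 1) with hτ
    have hPτ : τ.Pos := hp _ (by omega) (by omega)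
    have hbase : Chainable (π (q + n)) τ := hc (q + n) (Nat.le_add_right _ _) (by omega)
    have hστ : Chainable σ τ := by
      obtain ⟨c1, c2, c3, c4, c5, c6⟩ := hbase
      refine ⟨by rw [AC]; exact c1, by rw [D]; exact c2, by rw [AC, D]; exact c3,
        by rw [AC]; exact c4, ?_, ?_⟩
      · rw [A]
        exact dvd_trans ((chain_a_dvd π q n (fun m hm hm' =>
          hc m hm (le_trans hm' (Nat.le_succ _)))).1) c5
      · rw [D]
        exact c6
    have hstep : pprod π q (n + 1) = σ * τ := rfl
    have hPm : (σ * τ).Pos := merged_pos P hPτ hστ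
    have hadvd : σ.a ∣ τ.a := by
      rw [A]
      exact (chain_a_dvd π q (n + 1) hc).1
    have hddvd : τ.d ∣ σ.d := by
      rw [D]
      exact hbase.2.2.2.2.2
    refine ⟨hPm, ?_, ?_, ?_, ?_⟩ <;> rw [hstep]
    · exact A
    · rfl
    · show σ.a * (τ.a * τ.c / σ.a) = _
      rw [Nat.mul_div_cancel' (dvd_trans hadvd (dvd_mul_right _ _))]
      have : q + (n + 1) = q + n + 1 := rfl
      rw [this]
    · show σ.b * σ.d / τ.d * τ.d = _
      rw [Nat.div_mul_cancel (dvd_trans hddvd (dvd_mul_left _ _))]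
      exact BD

open Pattern in
lemma pprod_pair_chainable (π : ℕ → Pattern) (q m n : ℕ)
    (hp : ∀ k, q ≤ k → k ≤ q + m + n + 1 → (π k).Pos)
    (hc : ∀ k, q ≤ k → k + 1 ≤ q + m + n + 1 → Chainable (π k) (π (k + 1))) :
    Chainable (pprod π q m) (pprod π (q + m + 1) n) := by
  obtain ⟨P1, A1, D1, AC1, BD1⟩ := pprod_struct π q m
    (fun k hk hk' => hp k hk (by omega)) (fun k hk hk' => hc k hk (by omega))
  obtain ⟨P2, A2, D2, AC2, BD2⟩ := pprod_struct π (q + m + 1) n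
    (fun k hk hk' => hp k (by omega) (by omega)) (fun k hk hk' => hc k (by omega) (by omega))
  have hbase : Chainable (π (q + m)) (π (q + m + 1)) := hc (q + m) (by omega) (by omega)
  obtain ⟨c1, c2, c3, c4, c5, c6⟩ := hbase
  refine ⟨by rw [AC1, A2]; exact c1, by rw [D1, BD2]; exact c2,
    by rw [AC1, A2, D1, BD2]; exact c3, by rw [AC1, A2]; exact c4, ?_, ?_⟩
  · rw [A1, A2]
    exact dvd_trans ((chain_a_dvd π q m (fun k hk hk' => hc k hk (by omega))).1) c5
  · rw [D1, D2]
    exact dvd_trans ((chain_a_dvd π (q + m + 1) n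
      (fun k hk hk' => hc k (by omega) (by omega))).2) c6

open Pattern in
lemma pprod_split (π : ℕ → Pattern) (q m : ℕ) :
    ∀ n, (∀ k, q ≤ k → k ≤ q + m + n + 1 → (π k).Pos) →
      (∀ k, q ≤ k → k + 1 ≤ q + m + n + 1 → Chainable (π k) (π (k + 1))) →
      pprod π q (m + n + 1) = pprod π q m * pprod π (q + m + 1) n := by
  intro n
  induction n with
  | zero => intro _ _; rfl
  | succ n ih =>
    intro hp hc
    have hp' : ∀ k, q ≤ k → k ≤ q + m + n + 1 → (π k).Pos :=
      fun k hk hk' => hp k hk (by omega)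
    have hc' : ∀ k, q ≤ k → k + 1 ≤ q + m + n + 1 → Chainable (π k) (π (k + 1)) :=
      fun k hk hk' => hc k hk (by omega)
    have step : pprod π q (m + (n + 1) + 1) = pprod π q (m + n + 1) * π (q + m + n + 2) := by
      show pprod π q (m + n + 1 + 1) = _
      show pprod π q (m + n + 1) * π (q + (m + n + 1) + 1) = _
      rw [show q + (m + n + 1) + 1 = q + m + n + 2 from by omega]
    rw [step, ih hp' hc']
    have step2 : pprod π (q + m + 1) (n + 1) = pprod π (q + m + 1) n * π (q + m + n + 2) := by
      show pprod π (q + m + 1) n * π (q + m + 1 + n + 1) = _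
      rw [show q + m + 1 + n + 1 = q + m + n + 2 from by omega]
    rw [step2]
    obtain ⟨P1, _, _, _, _⟩ := pprod_struct π q m
      (fun k hk hk' => hp k hk (by omega)) (fun k hk hk' => hc k hk (by omega))
    obtain ⟨P2, _, _, _, _⟩ := pprod_struct π (q + m + 1) n
      (fun k hk hk' => hp k (by omega) (by omega)) (fun k hk hk' => hc k (by omega) (by omega))
    have hP3 : (π (q + m + n + 2)).Pos := hp _ (by omega) (by omega)
    have hch1 : Chainable (pprod π q m) (pprod π (q + m + 1) n) :=
      pprod_pair_chainable π q m n (fun k hk hk' => hp k hk (by omega))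
        (fun k hk hk' => hc k hk (by omega))
    have hch2 : Chainable (pprod π (q + m + 1) n) (π (q + m + n + 2)) := by
      have := pprod_pair_chainable π (q + m + 1) n 0 (fun k hk hk' => hp k (by omega) (by omega))
        (fun k hk hk' => hc k (by omega) (by omega))
      have e : q + m + 1 + n + 1 = q + m + n + 2 := by omega
      rw [e] at this
      exact this
    exact pattern_mul_assoc P1 P2 hP3 hch1 hch2

lemma pprod_congr (π π' : ℕ → Pattern) (q q' : ℕ) :
    ∀ n, (∀ i, i ≤ n → π' (q' + i) = π (q + i)) → pprod π' q' n = pprod π q n := by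
  intro n
  induction n with
  | zero => intro h; exact h 0 le_rfl
  | succ n ih =>
    intro h
    show pprod π' q' n * π' (q' + n + 1) = pprod π q n * π (q + n + 1)
    rw [ih (fun i hi => h i (le_trans hi (Nat.le_succ _))),
      show q' + n + 1 = q' + (n + 1) from by omega, h (n + 1) le_rfl,
      show q + (n + 1) = q + n + 1 from by omega]

open Pattern in
lemma pprod_merge (π π' : ℕ → Pattern) (ℓ : ℕ)
    (h1 : ∀ m, m < ℓ → π' m = π m) (h2 : π' ℓ = π ℓ * π (ℓ + 1))
    (h3 : ∀ m, ℓ < m → π' m = π (m + 1)) (q : ℕ) (hqℓ : q ≤ ℓ) :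
    ∀ n, ℓ ≤ q + n →
      (∀ k, q ≤ k → k ≤ q + n + 1 → (π k).Pos) →
      (∀ k, q ≤ k → k + 1 ≤ q + n + 1 → Pattern.Chainable (π k) (π (k + 1))) →
      pprod π' q n = pprod π q (n + 1) := by
  intro n
  induction n with
  | zero =>
    intro hn hp hc
    have hq : ℓ = q := le_antisymm hn hqℓ
    show π' q = pprod π q 0 * π (q + 0 + 1)
    rw [← hq, h2, hq]
    rfl
  | succ n ih =>
    intro hn hp hc
    show pprod π' q n * π' (q + n + 1) = pprod π q (n + 1) * π (q + (n + 1) + 1)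
    rcases Nat.lt_or_ge ℓ (q + n + 1) with hl | hl
    · -- ℓ ≤ q + n
      rw [ih (by omega) (fun k hk hk' => hp k hk (by omega))
        (fun k hk hk' => hc k hk (by omega)), h3 _ hl]
      rw [show q + n + 1 + 1 = q + (n + 1) + 1 from by omega]
    · -- ℓ = q + n + 1
      have hq : ℓ = q + n + 1 := le_antisymm hn hl
      have e0 : pprod π' q n = pprod π q n :=
        pprod_congr π π' q q n (fun i hi => h1 (q + i) (by omega))
      rw [e0, ← hq, h2, hq]
      have P1 := (pprod_struct π q n (fun k hk hk' => hp k hk (by omega))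
        (fun k hk hk' => hc k hk (by omega))).1
      have P2 : (π (q + n + 1)).Pos := hp _ (by omega) (by omega)
      have P3 : (π (q + n + 1 + 1)).Pos := hp _ (by omega) (by omega)
      have hch1 : Pattern.Chainable (pprod π q n) (π (q + n + 1)) := by
        have := pprod_pair_chainable π q n 0 (fun k hk hk' => hp k hk (by omega))
          (fun k hk hk' => hc k hk (by omega))
        exact this
      have hch2 : Pattern.Chainable (π (q + n + 1)) (π (q + n + 1 + 1)) :=
        hc (q + n + 1) (by omega) (by omega)
      have := pattern_mul_assoc P1 P2 P3 hch1 hch2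
      rw [show q + (n + 1) + 1 = q + n + 1 + 1 from by omega]
      exact this.symm

lemma nmul_assoc {m n : ℕ} (f g h : ℕ → ℕ → ℂ) (hg : SuppIn m n g) :
    nmul (nmul f g) h = nmul f (nmul g h) := by
  funext i j
  have hfg : ∀ k', nmul f g i k' = ∑ k ∈ Finset.range m, f i k * g k k' := by
    intro k'
    refine tsum_eq_sum (fun k hk => ?_)
    rw [Finset.mem_range, not_lt] at hk
    rcases eq_or_ne (g k k') 0 with h0 | h0
    · rw [h0, mul_zero]
    · exact absurd (hg k k' h0).1 (by omega)
  have hgh : ∀ k, nmul g h k j = ∑ k' ∈ Finset.range n, g k k' * h k' j := by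
    intro k
    refine tsum_eq_sum (fun k' hk' => ?_)
    rw [Finset.mem_range, not_lt] at hk'
    rcases eq_or_ne (g k k') 0 with h0 | h0
    · rw [h0, zero_mul]
    · exact absurd (hg k k' h0).2 (by omega)
  show (∑' k', nmul f g i k' * h k' j) = ∑' k, f i k * nmul g h k j
  have e1 : (∑' k', nmul f g i k' * h k' j)
      = ∑ k' ∈ Finset.range n, nmul f g i k' * h k' j := by
    refine tsum_eq_sum (fun k' hk' => ?_)
    rw [Finset.mem_range, not_lt] at hk'
    have : nmul f g i k' = 0 := by
      rw [hfg k']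
      refine Finset.sum_eq_zero (fun k _ => ?_)
      rcases eq_or_ne (g k k') 0 with h0 | h0
      · rw [h0, mul_zero]
      · exact absurd (hg k k' h0).2 (by omega)
    rw [this, zero_mul]
  have e2 : (∑' k, f i k * nmul g h k j)
      = ∑ k ∈ Finset.range m, f i k * nmul g h k j := by
    refine tsum_eq_sum (fun k hk => ?_)
    rw [Finset.mem_range, not_lt] at hk
    have : nmul g h k j = 0 := by
      rw [hgh k]
      refine Finset.sum_eq_zero (fun k' _ => ?_)
      rcases eq_or_ne (g k k') 0 with h0 | h0
      · rw [h0, zero_mul]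
      · exact absurd (hg k k' h0).1 (by omega)
    rw [this, mul_zero]
  rw [e1, e2]
  simp only [hfg, hgh, Finset.sum_mul, Finset.mul_sum]
  rw [Finset.sum_comm]
  congr 1
  funext k
  congr 1
  funext k'
  ring

lemma nprod_congr (X X' : ℕ → ℕ → ℕ → ℂ) :
    ∀ t, (∀ s, s ≤ t → X' s = X s) → nprod X' t = nprod X t := by
  intro t
  induction t with
  | zero => intro h; exact h 0 le_rfl
  | succ t ih =>
    intro h
    show nmul (nprod X' t) (X' (t + 1)) = nmul (nprod X t) (X (t + 1))
    rw [ih (fun s hs => h s (le_trans hs (Nat.le_succ _))), h (t + 1) le_rfl]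

lemma nprod_insert (X X' : ℕ → ℕ → ℕ → ℂ) (ℓ : ℕ) {m n : ℕ}
    (hsupp : SuppIn m n (X ℓ))
    (e1 : ∀ s, s < ℓ → X' s = X s) (e2 : X' ℓ = nmul (X ℓ) (X (ℓ + 1)))
    (e3 : ∀ s, ℓ < s → X' s = X (s + 1)) :
    ∀ t, ℓ ≤ t → nprod X' t = nprod X (t + 1) := by
  intro t
  induction t with
  | zero =>
    intro h
    have hℓ : ℓ = 0 := Nat.le_zero.mp h
    show X' 0 = nmul (nprod X 0) (X 1)
    rw [← hℓ, e2, hℓ]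
    rfl
  | succ t ih =>
    intro h
    show nmul (nprod X' t) (X' (t + 1)) = nmul (nprod X (t + 1)) (X (t + 2))
    rcases Nat.lt_or_ge ℓ (t + 1) with hl | hl
    · rw [ih (by omega), e3 _ hl]
    · -- ℓ = t + 1
      have hℓ : ℓ = t + 1 := le_antisymm h hl
      rw [nprod_congr X X' t (fun s hs => e1 s (by omega)), ← hℓ, e2]
      rw [← nmul_assoc _ _ _ hsupp, hℓ]
      rfl

open Pattern in
lemma isFactorN_nmul {π₁ π₂ : Pattern} (h1 : π₁.Pos) (h2 : π₂.Pos) (hc : Chainable π₁ π₂)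
    {X₁ X₂ : ℕ → ℕ → ℂ} (hX1 : IsFactorN π₁ X₁) (hX2 : IsFactorN π₂ X₂) :
    IsFactorN (π₁ * π₂) (nmul X₁ X₂) := by
  obtain ⟨e, f, r, he, hf, hr, q1, q2, q3, q4, q5, q6⟩ := chain_struct h1 h2 hc
  intro i j h0
  show (∑' k, X₁ i k * X₂ k j) = 0
  have hz : ∀ k, X₁ i k * X₂ k j = 0 := by
    intro k
    by_contra hne
    obtain ⟨hb1, hb2⟩ := mul_ne_zero_iff.mp hne
    have hS1 : SpatN π₁ i k ≠ 0 := fun hS => hb1 (hX1 i k hS)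
    have hS2 : SpatN π₂ k j ≠ 0 := fun hS => hb2 (hX2 k j hS)
    rw [spatN_ne _ h1] at hS1
    rw [spatN_ne _ h2] at hS2
    obtain ⟨A1, A2, A3, A4⟩ := hS1
    obtain ⟨B1, B2, B3, B4⟩ := hS2
    unfold Pattern.rows at A1 B1
    unfold Pattern.cols at A2 B2
    have hff : SpatN (π₁ * π₂) i j ≠ 0 := by
      rw [spatN_ne _ (merged_pos h1 h2 hc), q5]
      unfold Pattern.rows Pattern.cols
      simp only
      refine ⟨?_, ?_, ?_, ?_⟩
      · rw [show π₁.a * (π₁.b * f) * π₂.d = π₁.a * π₁.b * π₁.d from by rw [q2]; ring]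
        exact A1
      · rw [show π₁.a * (e * π₂.c) * π₂.d = π₂.a * π₂.c * π₂.d from by rw [q1]; ring]
        exact B2
      · rw [show π₁.b * f * π₂.d = π₁.b * π₁.d from by rw [q2]; ring, A3,
          show π₁.c * π₁.d = π₂.b * π₂.d * e from by rw [q2, q3, q4]; ring,
          ← Nat.div_div_eq_div_mul, B3, Nat.div_div_eq_div_mul,
          show π₂.c * π₂.d * e = e * π₂.c * π₂.d from by ring]
      · rw [← Nat.mod_mod_of_dvd i ⟨f, q2⟩, A4, Nat.mod_mod_of_dvd k ⟨f, q2⟩, B4]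
    exact hff h0
  simp only [hz]
  exact tsum_zero

lemma enc_lt {δ d β b α a : ℕ} (hδ : δ < d) (hβ : β < b) (hα : α < a) :
    δ + d * (β + b * α) < a * b * d := by
  have h1 : β + b * α + 1 ≤ b * (α + 1) := by rw [Nat.mul_succ]; linarith
  have h2 : b * (α + 1) ≤ b * a := mul_le_mul_right hα b
  calc δ + d * (β + b * α) < d * (β + b * α + 1) := by rw [Nat.mul_succ]; linarith
    _ ≤ d * (b * a) := mul_le_mul_right (le_trans h1 h2) d
    _ = a * b * d := by ring

lemma enc_lt2 {δ d β b : ℕ} (hδ : δ < d) (hβ : β < b) : δ + d * β < d * b := by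
  calc δ + d * β < d * (β + 1) := by rw [Nat.mul_succ]; linarith
    _ ≤ d * b := mul_le_mul_right hβ d

open Pattern in
lemma support_decomp {π₁ π₂ : Pattern} (h1 : π₁.Pos) (h2 : π₂.Pos) (hc : Chainable π₁ π₂)
    {e f r : ℕ} (he : 0 < e) (hf : 0 < f) (hr : 0 < r)
    (q1 : π₂.a = π₁.a * e) (q2 : π₁.d = π₂.d * f) (q3 : π₁.c = e * r) (q4 : π₂.b = r * f)
    {i j : ℕ}
    (C1 : i < π₁.a * (π₁.b * f) * π₂.d) (C2 : j < π₁.a * (e * π₂.c) * π₂.d)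
    (C3 : i / (π₁.b * f * π₂.d) = j / (e * π₂.c * π₂.d)) (C4 : i % π₂.d = j % π₂.d) :
    ∃ α₁ β₁ δ' δ₂ γ' γ₁, α₁ < π₁.a ∧ β₁ < π₁.b ∧ δ' < f ∧ δ₂ < π₂.d ∧ γ' < π₂.c ∧ γ₁ < e ∧
      i = (δ₂ + π₂.d * δ') + π₁.d * (β₁ + π₁.b * α₁) ∧
      j = δ₂ + π₂.d * (γ' + π₂.c * (γ₁ + e * α₁)) := by
  obtain ⟨ha1, hb1, hc1, hd1⟩ := h1
  obtain ⟨ha2, hb2, hc2, hd2⟩ := h2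
  have hi : i < π₁.a * π₁.b * π₁.d := by
    rw [show π₁.a * π₁.b * π₁.d = π₁.a * (π₁.b * f) * π₂.d from by rw [q2]; ring]
    exact C1
  have hj : j < π₂.a * π₂.c * π₂.d := by
    rw [show π₂.a * π₂.c * π₂.d = π₁.a * (e * π₂.c) * π₂.d from by rw [q1]; ring]
    exact C2
  obtain ⟨hi1, hi2, hi3, hi4⟩ := lt_decomp hb1 hd1 hi
  obtain ⟨hj1, hj2, hj3, hj4⟩ := lt_decomp hc2 hd2 hj
  have hδ'lt : i % π₁.d / π₂.d < f := by
    rw [Nat.div_lt_iff_lt_mul hd2, mul_comm f π₂.d, ← q2]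
    exact hi1
  have hδsp : i % π₁.d % π₂.d = i % π₂.d := Nat.mod_mod_of_dvd i ⟨f, q2⟩
  have hα : i / (π₁.b * π₁.d) = j / (π₂.c * π₂.d) / e := by
    rw [Nat.div_div_eq_div_mul, show π₂.c * π₂.d * e = e * π₂.c * π₂.d from by ring, ← C3]
    congr 1
    rw [q2]; ring
  have hαj : j / (π₂.c * π₂.d) = j / (π₂.c * π₂.d) % e + e * (i / (π₁.b * π₁.d)) := by
    rw [hα]
    conv_lhs => rw [← Nat.mod_add_div (j / (π₂.c * π₂.d)) e]
  refine ⟨i / (π₁.b * π₁.d), i / π₁.d % π₁.b, i % π₁.d / π₂.d, i % π₂.d, j / π₂.d % π₂.c,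
    j / (π₂.c * π₂.d) % e, hi3, hi2, hδ'lt, Nat.mod_lt _ hd2, hj2, Nat.mod_lt _ he, ?_, ?_⟩
  · conv_lhs => rw [hi4]
    rw [← hδsp]
    rw [Nat.mod_add_div (i % π₁.d) π₂.d]
  · conv_lhs => rw [hj4, ← C4, hαj]

open Pattern in
lemma factor_split_c {π₁ π₂ : Pattern} (h1 : π₁.Pos) (h2 : π₂.Pos) (hc : Chainable π₁ π₂)
    {e f r : ℕ} (he : 0 < e) (hf : 0 < f) (hr : 0 < r)
    (q1 : π₂.a = π₁.a * e) (q2 : π₁.d = π₂.d * f) (q3 : π₁.c = e * r) (q4 : π₂.b = r * f)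
    (q5 : π₁ * π₂ = ⟨π₁.a, π₁.b * f, e * π₂.c, π₂.d⟩)
    (hcr : π₂.c ≤ r) {Z : ℕ → ℕ → ℂ} (hZ : IsFactorN (π₁ * π₂) Z) :
    ∃ X₁ X₂, IsFactorN π₁ X₁ ∧ IsFactorN π₂ X₂ ∧ nmul X₁ X₂ = Z := by
  obtain ⟨ha1, hb1, hc1, hd1⟩ := h1
  obtain ⟨ha2, hb2, hc2, hd2⟩ := h2
  set X₁ : ℕ → ℕ → ℂ := fun i k =>
    if i < π₁.rows ∧ k < π₁.cols ∧ i / (π₁.b * π₁.d) = k / (π₁.c * π₁.d) ∧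
        i % π₁.d = k % π₁.d ∧ k / π₁.d % π₁.c % r < π₂.c then
      Z i (i % π₂.d + π₂.d * (k / π₁.d % π₁.c % r + π₂.c * (k / π₁.d % π₁.c / r) +
        π₂.c * e * (i / (π₁.b * π₁.d))))
    else 0 with hX1v
  set X₂ : ℕ → ℕ → ℂ := fun k j =>
    if k < π₂.rows ∧ j < π₂.cols ∧ k / (π₂.b * π₂.d) = j / (π₂.c * π₂.d) ∧
        k % π₂.d = j % π₂.d ∧ k / π₂.d % π₂.b / f = j / π₂.d % π₂.c then (1 : ℂ)
    else 0 with hX2v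
  have hX1 : IsFactorN π₁ X₁ := by
    intro i k hS
    refine if_neg (fun hcond => ?_)
    exact (spatN_ne π₁ ⟨ha1, hb1, hc1, hd1⟩ i k).2
      ⟨hcond.1, hcond.2.1, hcond.2.2.1, hcond.2.2.2.1⟩ hS
  have hX2 : IsFactorN π₂ X₂ := by
    intro k j hS
    refine if_neg (fun hcond => ?_)
    exact (spatN_ne π₂ ⟨ha2, hb2, hc2, hd2⟩ k j).2
      ⟨hcond.1, hcond.2.1, hcond.2.2.1, hcond.2.2.2.1⟩ hS
  refine ⟨X₁, X₂, hX1, hX2, ?_⟩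
  funext i j
  show (∑' k, X₁ i k * X₂ k j) = Z i j
  rcases eq_or_ne (SpatN (π₁ * π₂) i j) 0 with hs | hs
  · rw [hZ i j hs]
    exact isFactorN_nmul ⟨ha1, hb1, hc1, hd1⟩ ⟨ha2, hb2, hc2, hd2⟩ hc hX1 hX2 i j hs
  · rw [spatN_ne _ (merged_pos ⟨ha1, hb1, hc1, hd1⟩ ⟨ha2, hb2, hc2, hd2⟩ hc), q5] at hs
    simp only [Pattern.rows, Pattern.cols] at hs
    obtain ⟨C1, C2, C3, C4⟩ := hs
    obtain ⟨α₁, β₁, δ', δ₂, γ', γ₁, hα₁, hβ₁, hδ', hδ₂, hγ', hγ₁, hi, hj⟩ :=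
      support_decomp ⟨ha1, hb1, hc1, hd1⟩ ⟨ha2, hb2, hc2, hd2⟩ hc he hf hr q1 q2 q3 q4 C1 C2 C3 C4
    set δ₁ := δ₂ + π₂.d * δ' with hδ₁def
    have hδ₁lt : δ₁ < π₁.d := by rw [q2]; exact enc_lt2 hδ₂ hδ'
    have hγ'r : γ' < r := lt_of_lt_of_le hγ' hcr
    set γK := γ' + r * γ₁ with hγKdef
    have hγK : γK < π₁.c := by rw [q3, mul_comm e r]; exact enc_lt2 hγ'r hγ₁
    set K := δ₁ + π₁.d * (γK + π₁.c * α₁) with hKdef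
    -- facts about i
    have hIm : i % π₁.d = δ₁ := by rw [hi]; exact mod_of _ hδ₁lt
    have hIdiv : i / (π₁.b * π₁.d) = α₁ := by rw [hi]; exact div2_of _ hδ₁lt hβ₁
    have hIlt : i < π₁.rows := by
      rw [hi]; unfold Pattern.rows; exact enc_lt hδ₁lt hβ₁ hα₁
    have hIalt : i = δ₂ + π₂.d * (δ' + f * (β₁ + π₁.b * α₁)) := by
      rw [hi, hδ₁def, q2]; ring
    have hImod2 : i % π₂.d = δ₂ := by rw [hIalt]; exact mod_of _ hδ₂
    -- facts about j
    have hJm : j % π₂.d = δ₂ := by rw [hj]; exact mod_of _ hδ₂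
    have hJmid : j / π₂.d % π₂.c = γ' := by
      rw [hj, mid_of _ hδ₂, Nat.mod_eq_of_lt hγ']
    have hα₂lt : γ₁ + e * α₁ < π₂.a := by rw [q1, mul_comm π₁.a e]; exact enc_lt2 hγ₁ hα₁
    have hJdiv : j / (π₂.c * π₂.d) = γ₁ + e * α₁ := by rw [hj]; exact div2_of _ hδ₂ hγ'
    have hJlt : j < π₂.cols := by
      rw [hj]; unfold Pattern.cols; exact enc_lt hδ₂ hγ' hα₂lt
    -- facts about K
    have hKm : K % π₁.d = δ₁ := mod_of _ hδ₁lt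
    have hKmid : K / π₁.d % π₁.c = γK := by rw [mid_of _ hδ₁lt, Nat.mod_eq_of_lt hγK]
    have hKdiv : K / (π₁.c * π₁.d) = α₁ := div2_of _ hδ₁lt hγK
    have hKlt : K < π₁.cols := by unfold Pattern.cols; exact enc_lt hδ₁lt hγK hα₁
    have hγKr : γK % r = γ' := by rw [hγKdef, Nat.add_mul_mod_self_left, Nat.mod_eq_of_lt hγ'r]
    have hγKd : γK / r = γ₁ := div_of _ hγ'r
    have hKalt : K = δ₂ + π₂.d * ((δ' + f * γ') + π₂.b * (γ₁ + e * α₁)) := by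
      rw [hKdef, hγKdef, hδ₁def, q2, q3, q4]; ring
    have hβ₂lt : δ' + f * γ' < π₂.b := by rw [q4, mul_comm r f]; exact enc_lt2 hδ' hγ'r
    have hK2m : K % π₂.d = δ₂ := by rw [hKalt]; exact mod_of _ hδ₂
    have hK2mid : K / π₂.d % π₂.b = δ' + f * γ' := by
      rw [hKalt, mid_of _ hδ₂, Nat.mod_eq_of_lt hβ₂lt]
    have hK2div : K / (π₂.b * π₂.d) = γ₁ + e * α₁ := by
      rw [hKalt]; exact div2_of _ hδ₂ hβ₂lt
    have hK2lt : K < π₂.rows := by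
      unfold Pattern.rows; rw [hKalt]; exact enc_lt hδ₂ hβ₂lt hα₂lt
    have hKsel : K / π₂.d % π₂.b / f = γ' := by rw [hK2mid]; exact div_of _ hδ'
    -- the two factors at K
    have hX2K : X₂ K j = 1 :=
      if_pos ⟨hK2lt, hJlt, by rw [hK2div, hJdiv], by rw [hK2m, hJm], by rw [hKsel, hJmid]⟩
    have hX1K : X₁ i K = Z i j := by
      have harg : i % π₂.d + π₂.d * (K / π₁.d % π₁.c % r + π₂.c * (K / π₁.d % π₁.c / r) +
          π₂.c * e * (i / (π₁.b * π₁.d))) = j := by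
        rw [hImod2, hKmid, hγKr, hγKd, hIdiv, hj]; ring
      have hcc : i < π₁.rows ∧ K < π₁.cols ∧ i / (π₁.b * π₁.d) = K / (π₁.c * π₁.d) ∧
          i % π₁.d = K % π₁.d ∧ K / π₁.d % π₁.c % r < π₂.c :=
        ⟨hIlt, hKlt, by rw [hIdiv, hKdiv], by rw [hIm, hKm], by rw [hKmid, hγKr]; exact hγ'⟩
      have hrfl : X₁ i K = (if i < π₁.rows ∧ K < π₁.cols ∧
          i / (π₁.b * π₁.d) = K / (π₁.c * π₁.d) ∧ i % π₁.d = K % π₁.d ∧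
          K / π₁.d % π₁.c % r < π₂.c then
        Z i (i % π₂.d + π₂.d * (K / π₁.d % π₁.c % r + π₂.c * (K / π₁.d % π₁.c / r) +
          π₂.c * e * (i / (π₁.b * π₁.d)))) else 0) := rfl
      rw [hrfl, if_pos hcc, harg]
    -- uniqueness
    have huniq : ∀ k, k ≠ K → X₁ i k * X₂ k j = 0 := by
      intro k hkK
      rcases eq_or_ne (X₁ i k) 0 with h0 | h0
      · rw [h0, zero_mul]
      rcases eq_or_ne (X₂ k j) 0 with h0' | h0'
      · rw [h0', mul_zero]
      exfalso
      apply hkK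
      have hA : i < π₁.rows ∧ k < π₁.cols ∧ i / (π₁.b * π₁.d) = k / (π₁.c * π₁.d) ∧
          i % π₁.d = k % π₁.d ∧ k / π₁.d % π₁.c % r < π₂.c := by
        by_contra hnc
        exact h0 (if_neg hnc)
      have hB : k < π₂.rows ∧ j < π₂.cols ∧ k / (π₂.b * π₂.d) = j / (π₂.c * π₂.d) ∧
          k % π₂.d = j % π₂.d ∧ k / π₂.d % π₂.b / f = j / π₂.d % π₂.c := by
        by_contra hnc
        exact h0' (if_neg hnc)
      obtain ⟨A1, A2, A3, A4, A5⟩ := hA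
      obtain ⟨B1, B2, B3, B4, B5⟩ := hB
      unfold Pattern.cols at A2
      obtain ⟨hk1, hk2, hk3, hk4⟩ := lt_decomp hc1 hd1 A2
      set g := k / π₁.d % π₁.c with hgdef
      have hkα : k / (π₁.c * π₁.d) = α₁ := by rw [← A3, hIdiv]
      have hkδ : k % π₁.d = δ₁ := by rw [← A4, hIm]
      rw [hkδ, hkα] at hk4
      have hkd : k / π₁.d = g + π₁.c * α₁ := by rw [hk4]; exact div_of _ hδ₁lt
      have hg1 : k / (π₂.b * π₂.d) = g / r + e * α₁ := by
        rw [show π₂.b * π₂.d = π₁.d * r from by rw [q4, q2]; ring, ← Nat.div_div_eq_div_mul,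
          hkd, q3, show g + e * r * α₁ = g + r * (e * α₁) from by ring,
          Nat.add_mul_div_left _ _ hr]
      have hgr : g / r = γ₁ := by
        rw [hg1, hJdiv] at B3
        exact Nat.add_right_cancel B3
      have hk5 : k = δ₂ + π₂.d * ((δ' + f * (g % r)) + π₂.b * (g / r + e * α₁)) := by
        rw [hk4, hδ₁def, q2, q3, q4]
        conv_lhs => rw [← Nat.mod_add_div g r]
        ring
      have hβ₂lt' : δ' + f * (g % r) < π₂.b := by
        rw [q4, mul_comm r f]; exact enc_lt2 hδ' (Nat.mod_lt _ hr)
      have hgsel : k / π₂.d % π₂.b / f = g % r := by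
        rw [hk5, mid_of _ hδ₂, Nat.mod_eq_of_lt hβ₂lt']
        exact div_of _ hδ'
      have hgr2 : g % r = γ' := by rw [← hgsel, B5, hJmid]
      have hgK : g = γK := by rw [hγKdef, ← hgr2, ← hgr, Nat.mod_add_div]
      rw [hk4, hgK]
    rw [tsum_eq_single K huniq, hX1K, hX2K, mul_one]

open Pattern in
lemma factor_split_b {π₁ π₂ : Pattern} (h1 : π₁.Pos) (h2 : π₂.Pos) (hc : Chainable π₁ π₂)
    {e f r : ℕ} (he : 0 < e) (hf : 0 < f) (hr : 0 < r)
    (q1 : π₂.a = π₁.a * e) (q2 : π₁.d = π₂.d * f) (q3 : π₁.c = e * r) (q4 : π₂.b = r * f)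
    (q5 : π₁ * π₂ = ⟨π₁.a, π₁.b * f, e * π₂.c, π₂.d⟩)
    (hbr : π₁.b ≤ r) {Z : ℕ → ℕ → ℂ} (hZ : IsFactorN (π₁ * π₂) Z) :
    ∃ X₁ X₂, IsFactorN π₁ X₁ ∧ IsFactorN π₂ X₂ ∧ nmul X₁ X₂ = Z := by
  obtain ⟨ha1, hb1, hc1, hd1⟩ := h1
  obtain ⟨ha2, hb2, hc2, hd2⟩ := h2
  set X₁ : ℕ → ℕ → ℂ := fun i k =>
    if i < π₁.rows ∧ k < π₁.cols ∧ i / (π₁.b * π₁.d) = k / (π₁.c * π₁.d) ∧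
        i % π₁.d = k % π₁.d ∧ k / π₁.d % π₁.c % r = i / π₁.d % π₁.b then (1 : ℂ)
    else 0 with hX1v
  set X₂ : ℕ → ℕ → ℂ := fun k j =>
    if k < π₂.rows ∧ j < π₂.cols ∧ k / (π₂.b * π₂.d) = j / (π₂.c * π₂.d) ∧
        k % π₂.d = j % π₂.d ∧ k / π₂.d % π₂.b / f < π₁.b then
      Z (k % π₂.d + π₂.d * (k / π₂.d % π₂.b % f) +
        π₁.d * (k / π₂.d % π₂.b / f + π₁.b * (k / (π₂.b * π₂.d) / e))) j
    else 0 with hX2v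
  have hX1 : IsFactorN π₁ X₁ := by
    intro i k hS
    refine if_neg (fun hcond => ?_)
    exact (spatN_ne π₁ ⟨ha1, hb1, hc1, hd1⟩ i k).2
      ⟨hcond.1, hcond.2.1, hcond.2.2.1, hcond.2.2.2.1⟩ hS
  have hX2 : IsFactorN π₂ X₂ := by
    intro k j hS
    refine if_neg (fun hcond => ?_)
    exact (spatN_ne π₂ ⟨ha2, hb2, hc2, hd2⟩ k j).2
      ⟨hcond.1, hcond.2.1, hcond.2.2.1, hcond.2.2.2.1⟩ hS
  refine ⟨X₁, X₂, hX1, hX2, ?_⟩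
  funext i j
  show (∑' k, X₁ i k * X₂ k j) = Z i j
  rcases eq_or_ne (SpatN (π₁ * π₂) i j) 0 with hs | hs
  · rw [hZ i j hs]
    exact isFactorN_nmul ⟨ha1, hb1, hc1, hd1⟩ ⟨ha2, hb2, hc2, hd2⟩ hc hX1 hX2 i j hs
  · rw [spatN_ne _ (merged_pos ⟨ha1, hb1, hc1, hd1⟩ ⟨ha2, hb2, hc2, hd2⟩ hc), q5] at hs
    simp only [Pattern.rows, Pattern.cols] at hs
    obtain ⟨C1, C2, C3, C4⟩ := hs
    obtain ⟨α₁, β₁, δ', δ₂, γ', γ₁, hα₁, hβ₁, hδ', hδ₂, hγ', hγ₁, hi, hj⟩ :=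
      support_decomp ⟨ha1, hb1, hc1, hd1⟩ ⟨ha2, hb2, hc2, hd2⟩ hc he hf hr q1 q2 q3 q4 C1 C2 C3 C4
    set δ₁ := δ₂ + π₂.d * δ' with hδ₁def
    have hδ₁lt : δ₁ < π₁.d := by rw [q2]; exact enc_lt2 hδ₂ hδ'
    have hβ₁r : β₁ < r := lt_of_lt_of_le hβ₁ hbr
    set γK := β₁ + r * γ₁ with hγKdef
    have hγK : γK < π₁.c := by rw [q3, mul_comm e r]; exact enc_lt2 hβ₁r hγ₁
    set K := δ₁ + π₁.d * (γK + π₁.c * α₁) with hKdef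
    -- facts about i
    have hIm : i % π₁.d = δ₁ := by rw [hi]; exact mod_of _ hδ₁lt
    have hImid : i / π₁.d % π₁.b = β₁ := by rw [hi, mid_of _ hδ₁lt, Nat.mod_eq_of_lt hβ₁]
    have hIdiv : i / (π₁.b * π₁.d) = α₁ := by rw [hi]; exact div2_of _ hδ₁lt hβ₁
    have hIlt : i < π₁.rows := by
      rw [hi]; unfold Pattern.rows; exact enc_lt hδ₁lt hβ₁ hα₁
    -- facts about j
    have hJm : j % π₂.d = δ₂ := by rw [hj]; exact mod_of _ hδ₂
    have hJmid : j / π₂.d % π₂.c = γ' := by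
      rw [hj, mid_of _ hδ₂, Nat.mod_eq_of_lt hγ']
    have hα₂lt : γ₁ + e * α₁ < π₂.a := by rw [q1, mul_comm π₁.a e]; exact enc_lt2 hγ₁ hα₁
    have hJdiv : j / (π₂.c * π₂.d) = γ₁ + e * α₁ := by rw [hj]; exact div2_of _ hδ₂ hγ'
    have hJlt : j < π₂.cols := by
      rw [hj]; unfold Pattern.cols; exact enc_lt hδ₂ hγ' hα₂lt
    -- facts about K
    have hKm : K % π₁.d = δ₁ := mod_of _ hδ₁lt
    have hKmid : K / π₁.d % π₁.c = γK := by rw [mid_of _ hδ₁lt, Nat.mod_eq_of_lt hγK]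
    have hKdiv : K / (π₁.c * π₁.d) = α₁ := div2_of _ hδ₁lt hγK
    have hKlt : K < π₁.cols := by unfold Pattern.cols; exact enc_lt hδ₁lt hγK hα₁
    have hγKr : γK % r = β₁ := by rw [hγKdef, Nat.add_mul_mod_self_left, Nat.mod_eq_of_lt hβ₁r]
    have hγKd : γK / r = γ₁ := div_of _ hβ₁r
    have hKalt : K = δ₂ + π₂.d * ((δ' + f * β₁) + π₂.b * (γ₁ + e * α₁)) := by
      rw [hKdef, hγKdef, hδ₁def, q2, q3, q4]; ring
    have hβ₂lt : δ' + f * β₁ < π₂.b := by rw [q4, mul_comm r f]; exact enc_lt2 hδ' hβ₁r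
    have hK2m : K % π₂.d = δ₂ := by rw [hKalt]; exact mod_of _ hδ₂
    have hK2mid : K / π₂.d % π₂.b = δ' + f * β₁ := by
      rw [hKalt, mid_of _ hδ₂, Nat.mod_eq_of_lt hβ₂lt]
    have hK2div : K / (π₂.b * π₂.d) = γ₁ + e * α₁ := by
      rw [hKalt]; exact div2_of _ hδ₂ hβ₂lt
    have hK2lt : K < π₂.rows := by
      unfold Pattern.rows; rw [hKalt]; exact enc_lt hδ₂ hβ₂lt hα₂lt
    have hKsel : K / π₂.d % π₂.b / f = β₁ := by rw [hK2mid]; exact div_of _ hδ'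
    have hKself : K / π₂.d % π₂.b % f = δ' := by
      rw [hK2mid, Nat.add_mul_mod_self_left, Nat.mod_eq_of_lt hδ']
    have hKdive : K / (π₂.b * π₂.d) / e = α₁ := by
      rw [hK2div]; exact div_of _ hγ₁
    -- the two factors at K
    have hX1K : X₁ i K = 1 :=
      if_pos ⟨hIlt, hKlt, by rw [hIdiv, hKdiv], by rw [hIm, hKm], by rw [hKmid, hγKr, hImid]⟩
    have hX2K : X₂ K j = Z i j := by
      have hcc : K < π₂.rows ∧ j < π₂.cols ∧ K / (π₂.b * π₂.d) = j / (π₂.c * π₂.d) ∧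
          K % π₂.d = j % π₂.d ∧ K / π₂.d % π₂.b / f < π₁.b :=
        ⟨hK2lt, hJlt, by rw [hK2div, hJdiv], by rw [hK2m, hJm], by rw [hKsel]; exact hβ₁⟩
      have harg : K % π₂.d + π₂.d * (K / π₂.d % π₂.b % f) +
          π₁.d * (K / π₂.d % π₂.b / f + π₁.b * (K / (π₂.b * π₂.d) / e)) = i := by
        rw [hK2m, hKself, hKsel, hKdive, hi]
      have hrfl : X₂ K j = (if K < π₂.rows ∧ j < π₂.cols ∧
          K / (π₂.b * π₂.d) = j / (π₂.c * π₂.d) ∧ K % π₂.d = j % π₂.d ∧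
          K / π₂.d % π₂.b / f < π₁.b then
        Z (K % π₂.d + π₂.d * (K / π₂.d % π₂.b % f) +
          π₁.d * (K / π₂.d % π₂.b / f + π₁.b * (K / (π₂.b * π₂.d) / e))) j else 0) := rfl
      rw [hrfl, if_pos hcc, harg]
    -- uniqueness
    have huniq : ∀ k, k ≠ K → X₁ i k * X₂ k j = 0 := by
      intro k hkK
      rcases eq_or_ne (X₁ i k) 0 with h0 | h0
      · rw [h0, zero_mul]
      rcases eq_or_ne (X₂ k j) 0 with h0' | h0'
      · rw [h0', mul_zero]
      exfalso
      apply hkK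
      have hA : i < π₁.rows ∧ k < π₁.cols ∧ i / (π₁.b * π₁.d) = k / (π₁.c * π₁.d) ∧
          i % π₁.d = k % π₁.d ∧ k / π₁.d % π₁.c % r = i / π₁.d % π₁.b := by
        by_contra hnc
        exact h0 (if_neg hnc)
      have hB : k < π₂.rows ∧ j < π₂.cols ∧ k / (π₂.b * π₂.d) = j / (π₂.c * π₂.d) ∧
          k % π₂.d = j % π₂.d ∧ k / π₂.d % π₂.b / f < π₁.b := by
        by_contra hnc
        exact h0' (if_neg hnc)
      obtain ⟨A1, A2, A3, A4, A5⟩ := hA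
      obtain ⟨B1, B2, B3, B4, B5⟩ := hB
      unfold Pattern.cols at A2
      obtain ⟨hk1, hk2, hk3, hk4⟩ := lt_decomp hc1 hd1 A2
      set g := k / π₁.d % π₁.c with hgdef
      have hkα : k / (π₁.c * π₁.d) = α₁ := by rw [← A3, hIdiv]
      have hkδ : k % π₁.d = δ₁ := by rw [← A4, hIm]
      rw [hkδ, hkα] at hk4
      have hkd : k / π₁.d = g + π₁.c * α₁ := by rw [hk4]; exact div_of _ hδ₁lt
      have hg1 : k / (π₂.b * π₂.d) = g / r + e * α₁ := by
        rw [show π₂.b * π₂.d = π₁.d * r from by rw [q4, q2]; ring, ← Nat.div_div_eq_div_mul,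
          hkd, q3, show g + e * r * α₁ = g + r * (e * α₁) from by ring,
          Nat.add_mul_div_left _ _ hr]
      have hgr : g / r = γ₁ := by
        rw [hg1, hJdiv] at B3
        exact Nat.add_right_cancel B3
      have hgr2 : g % r = β₁ := by rw [← hImid, ← A5]
      have hgK : g = γK := by rw [hγKdef, ← hgr2, ← hgr, Nat.mod_add_div]
      rw [hk4, hgK]
    rw [tsum_eq_single K huniq, hX1K, hX2K, one_mul]

open Pattern in
lemma factor_split {π₁ π₂ : Pattern} (h1 : π₁.Pos) (h2 : π₂.Pos) (hc : Chainable π₁ π₂)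
    (hred : RedundantPair π₁ π₂) {Z : ℕ → ℕ → ℂ} (hZ : IsFactorN (π₁ * π₂) Z) :
    ∃ X₁ X₂, IsFactorN π₁ X₁ ∧ IsFactorN π₂ X₂ ∧ nmul X₁ X₂ = Z := by
  obtain ⟨e, f, r, he, hf, hr, q1, q2, q3, q4, q5, q6⟩ := chain_struct h1 h2 hc
  rw [RedundantPair, q6] at hred
  rcases min_le_iff.mp hred with hbr | hcr
  · exact factor_split_b h1 h2 hc he hf hr q1 q2 q3 q4 q5 hbr hZ
  · exact factor_split_c h1 h2 hc he hf hr q1 q2 q3 q4 q5 hcr hZ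

lemma sum_split (F : ℕ → ℕ) (s : ℕ) :
    ∀ t, ∑ m ∈ Finset.range (s + t), F m
      = (∑ m ∈ Finset.range s, F m) + ∑ i ∈ Finset.range t, F (s + i) := by
  intro t
  induction t with
  | zero => simp
  | succ t ih =>
    rw [show s + (t + 1) = (s + t) + 1 from rfl, Finset.sum_range_succ, ih,
      Finset.sum_range_succ, add_assoc]

lemma bset_congr (π₁ π₂ : ℕ → Pattern) (L : ℕ) (h : ∀ k < L, π₁ k = π₂ k) :
    Bset π₁ L = Bset π₂ L := by
  unfold Bset
  ext M
  constructor
  · rintro ⟨X, hX, hM⟩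
    exact ⟨X, fun ℓ hℓ => (h ℓ hℓ) ▸ hX ℓ hℓ, hM⟩
  · rintro ⟨X, hX, hM⟩
    exact ⟨X, fun ℓ hℓ => (h ℓ hℓ).symm ▸ hX ℓ hℓ, hM⟩

open Pattern in
lemma bset_merge (π π' : ℕ → Pattern) (L ℓ : ℕ) (hℓL : ℓ + 1 < L)
    (hPos : ∀ m < L, (π m).Pos)
    (hch : Chainable (π ℓ) (π (ℓ + 1)))
    (hred : RedundantPair (π ℓ) (π (ℓ + 1)))
    (h1 : ∀ m < ℓ, π' m = π m) (h2 : π' ℓ = π ℓ * π (ℓ + 1))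
    (h3 : ∀ m, ℓ < m → π' m = π (m + 1)) :
    Bset π' (L - 1) = Bset π L := by
  have hP1 : (π ℓ).Pos := hPos ℓ (by omega)
  have hP2 : (π (ℓ + 1)).Pos := hPos (ℓ + 1) hℓL
  ext M
  constructor
  · -- Bset π' (L-1) ⊆ Bset π L
    rintro ⟨Y, hYf, hM⟩
    have hYℓ : IsFactorN (π ℓ * π (ℓ + 1)) (Y ℓ) := by
      rw [← h2]
      exact hYf ℓ (by omega)
    obtain ⟨X₁, X₂, hX1, hX2, hXm⟩ := factor_split hP1 hP2 hch hred hYℓ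
    set X : ℕ → ℕ → ℕ → ℂ := fun m =>
      if m < ℓ then Y m else if m = ℓ then X₁ else if m = ℓ + 1 then X₂ else Y (m - 1)
      with hXdef
    refine ⟨X, ?_, ?_⟩
    · intro m hm
      by_cases hm1 : m < ℓ
      · have : X m = Y m := by simp [hXdef, hm1]
        rw [this, ← h1 m hm1]
        exact hYf m (by omega)
      by_cases hm2 : m = ℓ
      · have : X m = X₁ := by simp [hXdef, hm1, hm2]
        rw [this, hm2]
        exact hX1
      by_cases hm3 : m = ℓ + 1
      · have : X m = X₂ := by simp [hXdef, hm1, hm2, hm3]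
        rw [this, hm3]
        exact hX2
      · have : X m = Y (m - 1) := by simp [hXdef, hm1, hm2, hm3]
        rw [this]
        have he : π' (m - 1) = π m := by
          rw [h3 (m - 1) (by omega), show m - 1 + 1 = m from by omega]
        rw [← he]
        exact hYf (m - 1) (by omega)
    · rw [hM]
      have hprod : nprod Y (L - 2) = nprod X (L - 2 + 1) := by
        refine nprod_insert X Y ℓ (isFactorN_suppIn hP1 ?_) ?_ ?_ ?_ (L - 2) (by omega)
        · have : X ℓ = X₁ := by simp [hXdef]
          rw [this]; exact hX1
        · intro s hs; simp [hXdef, hs]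
        · have hXℓ : X ℓ = X₁ := by simp [hXdef]
          have hXℓ1 : X (ℓ + 1) = X₂ := by simp [hXdef]
          rw [hXℓ, hXℓ1, hXm]
        · intro s hs
          have : X (s + 1) = Y (s + 1 - 1) := by
            simp [hXdef, show ¬(s + 1 < ℓ) from by omega, show ¬(s + 1 = ℓ) from by omega,
              show ¬(s + 1 = ℓ + 1) from by omega, show ¬(s = ℓ) from by omega]
          rw [this, show s + 1 - 1 = s from by omega]
      rw [show L - 1 - 1 = L - 2 from by omega, hprod, show L - 2 + 1 = L - 1 from by omega]
  · -- Bset π L ⊆ Bset π' (L-1)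
    rintro ⟨X, hXf, hM⟩
    set Y : ℕ → ℕ → ℕ → ℂ := fun m =>
      if m < ℓ then X m else if m = ℓ then nmul (X ℓ) (X (ℓ + 1)) else X (m + 1) with hYdef
    refine ⟨Y, ?_, ?_⟩
    · intro m hm
      by_cases hm1 : m < ℓ
      · have : Y m = X m := by simp [hYdef, hm1]
        rw [this, h1 m hm1]
        exact hXf m (by omega)
      by_cases hm2 : m = ℓ
      · have : Y m = nmul (X ℓ) (X (ℓ + 1)) := by simp [hYdef, hm1, hm2]
        rw [this, hm2, h2]
        exact isFactorN_nmul hP1 hP2 hch (hXf ℓ (by omega)) (hXf (ℓ + 1) (by omega))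
      · have : Y m = X (m + 1) := by simp [hYdef, hm1, hm2]
        rw [this, h3 m (by omega)]
        exact hXf (m + 1) (by omega)
    · rw [hM]
      have hprod : nprod Y (L - 2) = nprod X (L - 2 + 1) := by
        refine nprod_insert X Y ℓ (isFactorN_suppIn hP1 (hXf ℓ (by omega))) ?_ ?_ ?_
          (L - 2) (by omega)
        · intro s hs; simp [hYdef, hs]
        · simp [hYdef]
        · intro s hs
          simp [hYdef, show ¬(s < ℓ) from by omega, show ¬(s = ℓ) from by omega]
      rw [show L - 1 - 1 = L - 2 from by omega, hprod, show L - 2 + 1 = L - 1 from by omega]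

lemma mono_of_lt (f : ℕ → ℕ) (p : ℕ) (h : ∀ k < p, f k < f (k + 1)) :
    ∀ k₂, k₂ ≤ p → ∀ k₁, k₁ ≤ k₂ → f k₁ ≤ f k₂ := by
  intro k₂
  induction k₂ with
  | zero => intro _ k₁ h1; rw [Nat.le_zero.mp h1]
  | succ n ih =>
    intro hn k₁ h1
    rcases eq_or_lt_of_le h1 with he | hlt
    · rw [he]
    · exact le_trans (ih (by omega) k₁ (by omega)) (le_of_lt (h n (by omega)))

end Aux

/-- **Proposition (redundancy removal).** Every chainable architecture can be compressed,
by grouping consecutive patterns, into a chainable non-redundant architecture representing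
the same set of butterfly matrices with at most the same number of parameters. -/
theorem redundancy_removal (L : ℕ) (hL : 1 ≤ L) (π : ℕ → Pattern)
    (hPos : ∀ ℓ < L, (π ℓ).Pos)
    (hch : ∀ ℓ, ℓ + 1 < L → Pattern.Chainable (π ℓ) (π (ℓ + 1))) :
    ∃ (p : ℕ) (f : ℕ → ℕ), 1 ≤ p ∧ f 0 = 0 ∧ f p = L ∧ (∀ k < p, f k < f (k + 1)) ∧
      (∀ k, k + 1 < p →
        Pattern.Chainable (pprod π (f k) (f (k + 1) - 1 - f k))
          (pprod π (f (k + 1)) (f (k + 2) - 1 - f (k + 1))) ∧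
        ¬ RedundantPair (pprod π (f k) (f (k + 1) - 1 - f k))
          (pprod π (f (k + 1)) (f (k + 2) - 1 - f (k + 1)))) ∧
      Bset (fun k => pprod π (f k) (f (k + 1) - 1 - f k)) p = Bset π L ∧
      (∑ k ∈ Finset.range p, Pattern.norm0 (pprod π (f k) (f (k + 1) - 1 - f k))) ≤
        ∑ ℓ ∈ Finset.range L, Pattern.norm0 (π ℓ) := by
  induction L using Nat.strong_induction_on generalizing π with
  | _ L IH =>
  by_cases hex : ∃ ℓ, ℓ + 1 < L ∧ RedundantPair (π ℓ) (π (ℓ + 1))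
  · -- there is a redundant pair: merge it and use the induction hypothesis
    obtain ⟨ℓ, hℓL, hred⟩ := hex
    set π' : ℕ → Pattern :=
      fun m => if m < ℓ then π m else if m = ℓ then π ℓ * π (ℓ + 1) else π (m + 1) with hπ'def
    have h1 : ∀ m < ℓ, π' m = π m := fun m hm => by simp [hπ'def, hm]
    have h2 : π' ℓ = π ℓ * π (ℓ + 1) := by simp [hπ'def]
    have h3 : ∀ m, ℓ < m → π' m = π (m + 1) := fun m hm => by
      simp [hπ'def, show ¬(m < ℓ) from by omega, show ¬(m = ℓ) from by omega]
    have hchℓ : Pattern.Chainable (π ℓ) (π (ℓ + 1)) := hch ℓ hℓL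
    have hPos' : ∀ m < L - 1, (π' m).Pos := by
      intro m hm
      by_cases hm1 : m < ℓ
      · rw [h1 m hm1]; exact hPos m (by omega)
      by_cases hm2 : m = ℓ
      · rw [hm2, h2]
        exact merged_pos (hPos ℓ (by omega)) (hPos (ℓ + 1) (by omega)) hchℓ
      · rw [h3 m (by omega)]; exact hPos (m + 1) (by omega)
    have hch' : ∀ m, m + 1 < L - 1 → Pattern.Chainable (π' m) (π' (m + 1)) := by
      intro m hm
      by_cases hm1 : m + 1 < ℓ
      · rw [h1 m (by omega), h1 (m + 1) hm1]; exact hch m (by omega)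
      by_cases hm2 : m + 1 = ℓ
      · rw [h1 m (by omega), hm2, h2]
        have hc0 : Pattern.Chainable (π m) (π ℓ) := by rw [← hm2]; exact hch m (by omega)
        exact chainable_mul_right (hPos m (by omega)) (hPos ℓ (by omega))
          (hPos (ℓ + 1) (by omega)) hc0 hchℓ
      by_cases hm3 : m = ℓ
      · rw [hm3, h2, h3 (ℓ + 1) (by omega)]
        exact chainable_mul_left (hPos ℓ (by omega)) (hPos (ℓ + 1) (by omega))
          (hPos (ℓ + 2) (by omega)) hchℓ (hch (ℓ + 1) (by omega))
      · rw [h3 m (by omega), h3 (m + 1) (by omega)]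
        exact hch (m + 1) (by omega)
    obtain ⟨p, f', hp1, hf0, hfp, hmono, hcnr, hB, hsum⟩ :=
      IH (L - 1) (by omega) (by omega) π' hPos' hch'
    have hf'le : ∀ k ≤ p, f' k ≤ L - 1 := by
      intro k hk
      have := mono_of_lt f' p hmono p le_rfl k hk
      omega
    set f : ℕ → ℕ := fun k => if f' k ≤ ℓ then f' k else f' k + 1 with hfdef
    have hfval : ∀ k, f k = if f' k ≤ ℓ then f' k else f' k + 1 := fun _ => rfl
    have hblk : ∀ k < p, pprod π (f k) (f (k + 1) - 1 - f k)
        = pprod π' (f' k) (f' (k + 1) - 1 - f' k) := by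
      intro k hk
      have hAB : f' k < f' (k + 1) := hmono k hk
      have hBle : f' (k + 1) ≤ L - 1 := hf'le (k + 1) (by omega)
      by_cases hc1 : f' (k + 1) ≤ ℓ
      · rw [hfval k, hfval (k + 1), if_pos (by omega), if_pos hc1]
        exact (pprod_congr π π' (f' k) (f' k) _ (fun i hi => h1 _ (by omega))).symm
      by_cases hc2 : ℓ < f' k
      · rw [hfval k, hfval (k + 1), if_neg (by omega), if_neg (by omega)]
        rw [show f' (k + 1) + 1 - 1 - (f' k + 1) = f' (k + 1) - 1 - f' k from by omega]
        refine (pprod_congr π π' (f' k + 1) (f' k) _ (fun i hi => ?_)).symm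
        rw [h3 (f' k + i) (by omega), show f' k + i + 1 = f' k + 1 + i from by omega]
      · have hc3 : f' k ≤ ℓ := by omega
        rw [hfval k, hfval (k + 1), if_pos hc3, if_neg (by omega)]
        rw [show f' (k + 1) + 1 - 1 - f' k = (f' (k + 1) - 1 - f' k) + 1 from by omega]
        exact (pprod_merge π π' ℓ h1 h2 h3 (f' k) hc3 (f' (k + 1) - 1 - f' k) (by omega)
          (fun k' h1' h2' => hPos k' (by omega))
          (fun k' h1' h2' => hch k' (by omega))).symm
    refine ⟨p, f, hp1, ?_, ?_, ?_, ?_, ?_, ?_⟩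
    · rw [hfval 0, hf0, if_pos (Nat.zero_le ℓ)]
    · rw [hfval p, hfp, if_neg (by omega)]
      omega
    · intro k hk
      rw [hfval k, hfval (k + 1)]
      have := hmono k hk
      split <;> split <;> omega
    · intro k hk
      rw [hblk k (by omega), hblk (k + 1) (by omega)]
      exact hcnr k hk
    · rw [bset_congr (fun k => pprod π (f k) (f (k + 1) - 1 - f k))
        (fun k => pprod π' (f' k) (f' (k + 1) - 1 - f' k)) p (fun k hk => hblk k hk), hB]
      exact bset_merge π π' L ℓ hℓL hPos hchℓ hred h1 h2 h3
    · calc ∑ k ∈ Finset.range p, (pprod π (f k) (f (k + 1) - 1 - f k)).norm0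
          = ∑ k ∈ Finset.range p, (pprod π' (f' k) (f' (k + 1) - 1 - f' k)).norm0 :=
            Finset.sum_congr rfl (fun k hk => by rw [hblk k (Finset.mem_range.mp hk)])
        _ ≤ ∑ m ∈ Finset.range (L - 1), (π' m).norm0 := hsum
        _ ≤ ∑ m ∈ Finset.range L, (π m).norm0 := by
            obtain ⟨t, hL1, hL2⟩ : ∃ t, L - 1 = ℓ + 1 + t ∧ L = ℓ + 2 + t :=
              ⟨L - 2 - ℓ, by omega, by omega⟩
            rw [hL1, hL2, sum_split _ (ℓ + 1) t, sum_split _ (ℓ + 2) t]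
            have e1 : ∑ i ∈ Finset.range t, (π' (ℓ + 1 + i)).norm0
                = ∑ i ∈ Finset.range t, (π (ℓ + 2 + i)).norm0 :=
              Finset.sum_congr rfl fun i _ => by
                rw [h3 (ℓ + 1 + i) (by omega), show ℓ + 1 + i + 1 = ℓ + 2 + i from by omega]
            rw [e1]
            have e2 : ∑ m ∈ Finset.range (ℓ + 1), (π' m).norm0
                ≤ ∑ m ∈ Finset.range (ℓ + 2), (π m).norm0 := by
              rw [Finset.sum_range_succ, Finset.sum_range_succ, Finset.sum_range_succ]
              have e3 : ∑ m ∈ Finset.range ℓ, (π' m).norm0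
                  = ∑ m ∈ Finset.range ℓ, (π m).norm0 :=
                Finset.sum_congr rfl fun m hm => by rw [h1 m (Finset.mem_range.mp hm)]
              rw [e3, h2, add_assoc]
              exact Nat.add_le_add_left
                (merged_norm0 (hPos ℓ (by omega)) (hPos (ℓ + 1) (by omega)) hchℓ hred) _
            exact Nat.add_le_add e2 le_rfl
  · -- no redundant pair: the architecture is already non-redundant
    push_neg at hex
    refine ⟨L, fun k => k, hL, rfl, rfl, fun k _ => Nat.lt_succ_self k, ?_, ?_, ?_⟩
    · intro k hk
      rw [show k + 1 - 1 - k = 0 from by omega, show k + 2 - 1 - (k + 1) = 0 from by omega]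
      exact ⟨hch k hk, hex k hk⟩
    · refine bset_congr _ π L (fun k hk => ?_)
      rw [show k + 1 - 1 - k = 0 from by omega]
      rfl
    · refine le_of_eq (Finset.sum_congr rfl (fun k hk => ?_))
      rw [show k + 1 - 1 - k = 0 from by omega]
      rfl
end
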